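/- arXiv:2204.08827 — 4 statements merged into one kernel-verified Lean document; each statement's English description precedes it below -/
import Mathlib

section
/- Under Assumptions (A1)–(A3), there exists a constant C > 0, depending only on Y(0), φ, the drift b (through c1, c2, p, y_*, γ), λ and T (in particular not on Z or Λ), such that for every noise path Z with Hölder constant Λ, the pathwise solution Y satisfies |Y(t) − Y(s)| ≤ C·(1 + Λ^{(p + γλ + λ − 1)/(γλ+λ−1)})·|t − s|^λ for all s, t ∈ [0,T]. -/
open MeasureTheory Set Real Filter Topology

private lemma my_rpow_le_one_add_rpow {L e θ : ℝ} (hL : 0 < L) (he : 0 ≤ e) (heθ : e ≤ θ) :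
    L ^ e ≤ 1 + L ^ θ := by
  rcases le_total L 1 with h | h
  · have h1 : L ^ e ≤ 1 := Real.rpow_le_one hL.le h he
    have h2 : 0 < L ^ θ := Real.rpow_pos_of_pos hL θ
    linarith
  · have h1 : L ^ e ≤ L ^ θ := Real.rpow_le_rpow_of_exponent_le h heθ
    linarith

private lemma my_add_rpow_le {x y p : ℝ} (hx : 0 ≤ x) (hy : 0 ≤ y) (hp : 0 ≤ p) :
    (x + y) ^ p ≤ 2 ^ p * (x ^ p + y ^ p) := by
  have h1 : x + y ≤ 2 * max x y := by
    rcases le_total x y with h | h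
    · simp [max_eq_right h]; linarith
    · simp [max_eq_left h]; linarith
  have hm : 0 ≤ max x y := le_max_of_le_left hx
  calc (x + y) ^ p ≤ (2 * max x y) ^ p :=
        Real.rpow_le_rpow (by positivity) h1 hp
    _ = 2 ^ p * (max x y) ^ p := Real.mul_rpow (by norm_num) hm
    _ ≤ 2 ^ p * (x ^ p + y ^ p) := by
        have : (max x y) ^ p ≤ x ^ p + y ^ p := by
          rcases le_total x y with h | h
          · rw [max_eq_right h]
            have : 0 ≤ x ^ p := Real.rpow_nonneg hx p
            linarith
          · rw [max_eq_left h]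
            have : 0 ≤ y ^ p := Real.rpow_nonneg hy p
            linarith
        have h2 : (0:ℝ) ≤ 2 ^ p := by positivity
        nlinarith

private lemma my_max_rpow_le {x y e : ℝ} (hx : 0 ≤ x) (hy : 0 ≤ y) (he : 0 ≤ e) :
    (max x y) ^ e ≤ x ^ e + y ^ e := by
  rcases le_total x y with h | h
  · rw [max_eq_right h]
    have : 0 ≤ x ^ e := Real.rpow_nonneg hx e
    linarith
  · rw [max_eq_left h]
    have : 0 ≤ y ^ e := Real.rpow_nonneg hy e
    linarith

set_option maxHeartbeats 1000000 in
theorem stmt_14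
    (T lam : ℝ) (hT : 0 < T) (hlam : lam ∈ Set.Ioo (0:ℝ) 1)
    (phi : ℝ → ℝ) (K : ℝ) (hK : 0 < K)
    (hphiH : ∀ s ∈ Set.Icc (0:ℝ) T, ∀ t ∈ Set.Icc (0:ℝ) T, |phi t - phi s| ≤ K * |t - s| ^ lam)
    (b : ℝ → ℝ → ℝ) (c1 p c2 ystar gam : ℝ)
    (hc1 : 0 < c1) (hp : 1 < p) (hc2 : 0 < c2) (hystar : 0 < ystar)
    (hgam : 1 / lam - 1 < gam)
    (hA2cont : ContinuousOn (fun q : ℝ × ℝ => b q.1 q.2)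
      {q : ℝ × ℝ | q.1 ∈ Set.Icc (0:ℝ) T ∧ phi q.1 < q.2})
    (hA2lip : ∀ ε : ℝ, 0 < ε → ε < 1 →
      ∀ t1 ∈ Set.Icc (0:ℝ) T, ∀ t2 ∈ Set.Icc (0:ℝ) T, ∀ y1 y2 : ℝ,
        phi t1 + ε < y1 → phi t2 + ε < y2 →
        |b t1 y1 - b t2 y2| ≤ c1 / ε ^ p * (|y1 - y2| + |t1 - t2| ^ lam))
    (hA3 : ∀ t ∈ Set.Icc (0:ℝ) T, ∀ y : ℝ, phi t < y → y ≤ phi t + ystar →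
      c2 / (y - phi t) ^ gam ≤ b t y)
    (Y0 : ℝ) (hA1 : phi 0 < Y0)
    :
    ∃ C : ℝ, 0 < C ∧
      ∀ (Z : ℝ → ℝ) (Lam : ℝ), 0 < Lam → Z 0 = 0 →
        (∀ s ∈ Set.Icc (0:ℝ) T, ∀ t ∈ Set.Icc (0:ℝ) T, |Z t - Z s| ≤ Lam * |t - s| ^ lam) →
        ∀ Y : ℝ → ℝ, ContinuousOn Y (Set.Icc (0:ℝ) T) →
          (∀ t ∈ Set.Icc (0:ℝ) T, phi t < Y t) →
          (∀ t ∈ Set.Icc (0:ℝ) T, Y t = Y0 + (∫ s in (0:ℝ)..t, b s (Y s)) + Z t) →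
          ∀ s ∈ Set.Icc (0:ℝ) T, ∀ t ∈ Set.Icc (0:ℝ) T,
            |Y t - Y s| ≤
              C * (1 + Lam ^ ((p + gam * lam + lam - 1) / (gam * lam + lam - 1)))
                * |t - s| ^ lam := by
  obtain ⟨hlam0, hlam1⟩ := hlam
  have h0T : (0:ℝ) ∈ Icc (0:ℝ) T := ⟨le_refl _, hT.le⟩
  set q : ℝ := gam * lam + lam - 1 with hqdef
  have hq : 0 < q := by
    have h1 : (1/lam) * lam = 1 := by field_simp
    nlinarith [hgam, hlam0]
  have hgam0 : 0 < gam := by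
    have : 0 < 1/lam - 1 := by
      have : 1 < 1/lam := by
        rw [lt_div_iff₀ hlam0]; linarith
      linarith
    linarith
  have hp0 : 0 < p := by linarith
  have hTlam : (0:ℝ) < T ^ lam := Real.rpow_pos_of_pos hT lam
  -- Hölder continuity of phi implies continuity on [0,T]
  have hphicont : ContinuousOn phi (Icc 0 T) := by
    intro s hs
    have htend : Tendsto (fun t => K * |t - s| ^ lam) (𝓝[Icc 0 T] s) (𝓝 0) := by
      have hcont : ContinuousAt (fun t : ℝ => K * |t - s| ^ lam) s := by
        have h1 : ContinuousAt (fun t : ℝ => |t - s|) s :=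
          (continuous_abs.comp (continuous_id.sub continuous_const)).continuousAt
        exact (h1.rpow_const (Or.inr hlam0.le)).const_mul K
      have h0 : K * |s - s| ^ lam = 0 := by
        simp [Real.zero_rpow hlam0.ne']
      have := hcont.continuousWithinAt (s := Icc 0 T)
      rw [ContinuousWithinAt, h0] at this
      exact this
    have hsq : Tendsto (fun t => phi t - phi s) (𝓝[Icc 0 T] s) (𝓝 0) := by
      apply squeeze_zero_norm' _ htend
      filter_upwards [eventually_mem_nhdsWithin] with t ht
      exact hphiH s hs t ht
    have : Tendsto phi (𝓝[Icc 0 T] s) (𝓝 (phi s)) := by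
      have := hsq.add_const (phi s)
      simpa using this
    exact this
  -- fixed constants
  set ε0 : ℝ := min ystar 1 / 2 with hε0def
  have hε0 : 0 < ε0 := by
    rw [hε0def]; positivity
  have hε0le : ε0 ≤ 1/2 := by
    rw [hε0def]
    have := min_le_right ystar 1
    linarith
  have hε0y : 2 * ε0 ≤ ystar := by
    rw [hε0def]
    have := min_le_left ystar 1
    linarith
  set f0 : ℝ := Y0 - phi 0 with hf0def
  have hf0 : 0 < f0 := by rw [hf0def]; linarith
  set L0 : ℝ := c1 / (ε0/2) ^ p with hL0def
  have hL0 : 0 < L0 := by rw [hL0def]; positivity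
  set P : ℝ := |phi 0| + K * T ^ lam with hPdef
  have hP : 0 ≤ P := by rw [hPdef]; positivity
  set β1 : ℝ := |b 0 (phi 0 + ε0)| + L0 * (K * T ^ lam + T ^ lam) with hβ1def
  have hβ1nn : 0 ≤ β1 := by rw [hβ1def]; positivity
  set cW : ℝ := (2 * 4 ^ ((1 - lam)/lam) / c2) ^ (lam / q) with hcWdef
  have hcW : 0 < cW := by rw [hcWdef]; positivity
  set J0 : ℝ := 1/f0 + 1/ystar + 1 + cW * K ^ (1/q) with hJ0def
  have hJ0 : 0 < J0 := by
    rw [hJ0def]; positivity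
  set E1 : ℝ := (β1 + L0*(P+1) + c1 * 8 ^ p * J0 ^ p + L0*|Y0|) * (1 + Real.exp (L0*T)) * T^(1-lam)
    with hE1def
  have hE1 : 0 ≤ E1 := by rw [hE1def]; positivity
  set E2 : ℝ := (c1 * 8 ^ p * cW ^ p) * (1 + Real.exp (L0*T)) * T^(1-lam) with hE2def
  have hE2 : 0 ≤ E2 := by rw [hE2def]; positivity
  set E3 : ℝ := L0 * T^lam * (1 + Real.exp (L0*T)) * T^(1-lam) + 1 with hE3def
  have hE3 : 0 ≤ E3 := by rw [hE3def]; positivity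
  refine ⟨E1 + E2 + E3 + 1, by positivity, ?_⟩
  intro Z Lam hLam hZ0 hZH Y hYc hYgt hYeq
  -- continuity of the drift along the path
  set g : ℝ → ℝ := fun s => b s (Y s) with hgdef
  have hgcont : ContinuousOn g (Icc 0 T) := by
    have h1 : ContinuousOn (fun s : ℝ => (s, Y s)) (Icc 0 T) :=
      (continuousOn_id).prodMk hYc
    exact hA2cont.comp h1 (fun s hs => ⟨hs, hYgt s hs⟩)
  have hgint : ∀ a ∈ Icc (0:ℝ) T, ∀ b' ∈ Icc (0:ℝ) T, IntervalIntegrable g volume a b' := by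
    intro a ha b' hb'
    exact (hgcont.mono (uIcc_subset_Icc ha hb')).intervalIntegrable
  have hY0 : Y 0 = Y0 := by
    have := hYeq 0 h0T
    simpa [intervalIntegral.integral_same, hZ0] using this
  have hYdiff : ∀ s ∈ Icc (0:ℝ) T, ∀ t ∈ Icc (0:ℝ) T,
      Y t - Y s = (∫ u in s..t, g u) + (Z t - Z s) := by
    intro s hs t ht
    have h1 := hYeq t ht
    have h2 := hYeq s hs
    have h3 : (∫ u in (0:ℝ)..t, g u) - ∫ u in (0:ℝ)..s, g u = ∫ u in s..t, g u :=
      intervalIntegral.integral_interval_sub_left (hgint 0 h0T t ht) (hgint 0 h0T s hs)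
    rw [h1, h2]; linarith
  -- barrier quantities
  set W : ℝ := Lam + K with hWdef
  have hW : 0 < W := by rw [hWdef]; linarith
  set Hb : ℝ := (c2 / (W * (2*W) ^ ((1-lam)/lam))) ^ (lam/q) with hHbdef
  have hDpos : 0 < W * (2*W) ^ ((1-lam)/lam) := by positivity
  have hHb : 0 < Hb := by rw [hHbdef]; positivity
  set H : ℝ := min (min f0 ystar) (min 1 Hb) with hHdef
  have hH : 0 < H := by
    rw [hHdef]
    exact lt_min (lt_min hf0 hystar) (lt_min one_pos hHb)
  have hHf0 : H ≤ f0 := le_trans (min_le_left _ _) (min_le_left _ _)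
  have hHy : H ≤ ystar := le_trans (min_le_left _ _) (min_le_right _ _)
  have hH1 : H ≤ 1 := le_trans (min_le_right _ _) (min_le_left _ _)
  have hHHb : H ≤ Hb := le_trans (min_le_right _ _) (min_le_right _ _)
  have hHε0 : H/2 ≤ ε0 := by
    have : H ≤ min ystar 1 := le_min hHy hH1
    rw [hε0def]; linarith
  -- the key scalar inequality for the barrier
  have hkey : W * (2*W) ^ ((1-lam)/lam) * H^(q/lam) ≤ c2 := by
    have hHbq : Hb ^ (q/lam) = c2 / (W * (2*W) ^ ((1-lam)/lam)) := by
      rw [hHbdef, ← Real.rpow_mul (by positivity)]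
      have : lam/q * (q/lam) = 1 := by field_simp
      rw [this, Real.rpow_one]
    have h1 : H ^ (q/lam) ≤ Hb ^ (q/lam) :=
      Real.rpow_le_rpow hH.le hHHb (by positivity)
    rw [hHbq] at h1
    calc W * (2*W) ^ ((1-lam)/lam) * H^(q/lam)
        ≤ W * (2*W) ^ ((1-lam)/lam) * (c2 / (W * (2*W) ^ ((1-lam)/lam))) := by
          apply mul_le_mul_of_nonneg_left h1 hDpos.le
      _ = c2 := by field_simp
  -- Step 1 : barrier, Y t - phi t ≥ H/2 on [0,T]
  have hbar : ∀ t ∈ Icc (0:ℝ) T, H/2 ≤ Y t - phi t := by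
    intro t ht
    by_contra hcon
    push_neg at hcon
    set S : Set ℝ := {s | s ∈ Icc 0 t ∧ H ≤ Y s - phi s} with hSdef
    have hIccsub : Icc (0:ℝ) t ⊆ Icc 0 T := Icc_subset_Icc le_rfl ht.2
    have h0S : 0 ∈ S := by
      refine ⟨⟨le_rfl, ht.1⟩, ?_⟩
      rw [hY0]; exact le_trans hHf0 (le_of_eq hf0def.symm)
    have hSbdd : BddAbove S := ⟨t, fun s hs => hs.1.2⟩
    have hScl : IsClosed S := by
      have : S = Icc 0 t ∩ (fun s => Y s - phi s) ⁻¹' (Ici H) := by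
        ext s; simp [hSdef, Set.mem_Ici, and_comm]
      rw [this]
      exact ContinuousOn.preimage_isClosed_of_isClosed
        (((hYc.mono hIccsub).sub (hphicont.mono hIccsub))) isClosed_Icc isClosed_Ici
    set σ : ℝ := sSup S with hσdef
    have hσS : σ ∈ S := hScl.csSup_mem ⟨0, h0S⟩ hSbdd
    obtain ⟨⟨hσ0, hσt⟩, hfσ⟩ := hσS
    have hσT : σ ∈ Icc (0:ℝ) T := ⟨hσ0, hσt.trans ht.2⟩
    have hσlt : σ < t := by
      rcases lt_or_eq_of_le hσt with h | h
      · exact h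
      · exfalso; rw [h] at hfσ; linarith
    have hup : ∀ s, σ < s → s ≤ t → Y s - phi s < H := by
      intro s h1 h2
      by_contra h3
      push_neg at h3
      have : s ≤ σ := le_csSup hSbdd ⟨⟨le_trans hσ0 h1.le, h2⟩, h3⟩
      linarith
    have hfσeq : Y σ - phi σ = H := by
      refine le_antisymm ?_ hfσ
      by_contra h3
      push_neg at h3
      have hcw : ContinuousWithinAt (fun s => Y s - phi s) (Icc 0 T) σ :=
        ((hYc σ hσT).sub (hphicont σ hσT))
      have hev : ∀ᶠ s in 𝓝[Icc (0:ℝ) T] σ, H < Y s - phi s :=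
        hcw.eventually (eventually_gt_nhds h3)
      have hsub : Ioc σ t ⊆ Icc (0:ℝ) T := fun s hs =>
        ⟨le_trans hσ0 hs.1.le, hs.2.trans ht.2⟩
      have hev2 : ∀ᶠ s in 𝓝[Ioc σ t] σ, H < Y s - phi s :=
        hev.filter_mono (nhdsWithin_mono σ hsub)
      have hne : (𝓝[Ioc σ t] σ).NeBot := by
        apply mem_closure_iff_nhdsWithin_neBot.1
        rw [closure_Ioc hσlt.ne]
        exact ⟨le_rfl, hσlt.le⟩
      obtain ⟨s, hs1, hs2⟩ := (hev2.and eventually_mem_nhdsWithin).exists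
      exact absurd hs1 (not_lt.2 (hup s hs2.1 hs2.2).le)
    have hfs_le : ∀ s ∈ Icc σ t, Y s - phi s ≤ H := by
      intro s hs
      rcases eq_or_lt_of_le hs.1 with he | hl
      · rw [← he]; exact hfσeq.le
      · exact (hup s hl hs.2).le
    have hglb : ∀ s ∈ Icc σ t, c2 / H ^ gam ≤ g s := by
      intro s hs
      have hsT : s ∈ Icc (0:ℝ) T := ⟨hσ0.trans hs.1, hs.2.trans ht.2⟩
      have h1 : phi s < Y s := hYgt s hsT
      have h2 : Y s ≤ phi s + ystar := by
        have := hfs_le s hs; linarith [hHy]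
      refine le_trans ?_ (hA3 s hsT (Y s) h1 h2)
      have h4 : (Y s - phi s) ^ gam ≤ H ^ gam :=
        Real.rpow_le_rpow (by linarith) (hfs_le s hs) hgam0.le
      have h5 : 0 < (Y s - phi s) ^ gam := Real.rpow_pos_of_pos (by linarith) gam
      exact div_le_div_of_nonneg_left hc2.le h5 h4
    have hint : (t - σ) * (c2 / H ^ gam) ≤ ∫ u in σ..t, g u := by
      have h1 := intervalIntegral.integral_mono_on (μ := volume) hσlt.le
        intervalIntegrable_const
        (hgint σ hσT t ht) hglb
      have h2 : c2 * (t - σ) / H ^ gam ≤ ∫ u in σ..t, g u := by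
        simpa [intervalIntegral.integral_const, smul_eq_mul, mul_comm] using h1
      have h3 : (t - σ) * (c2 / H ^ gam) = c2 * (t - σ) / H ^ gam := by ring
      linarith [h2, h3.le, h3.ge]
    have hYd := hYdiff σ hσT t ht
    have hu : 0 < t - σ := by linarith
    have habs : |t - σ| = t - σ := abs_of_pos hu
    have hZb : |Z t - Z σ| ≤ Lam * (t - σ)^lam := by
      have := hZH σ hσT t ht; rwa [habs] at this
    have hphib : |phi t - phi σ| ≤ K * (t - σ)^lam := by
      have := hphiH σ hσT t ht; rwa [habs] at this
    set u : ℝ := t - σ with hudef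
    have hmain : H + ((t-σ) * (c2 / H^gam) - W * u^lam) ≤ Y t - phi t := by
      have hexp : Y t - phi t = (Y σ - phi σ) + (Y t - Y σ) - (phi t - phi σ) := by ring
      rw [hexp, hfσeq, hYd]
      have h6 := (abs_le.1 hZb).1
      have h7 := (abs_le.1 hphib).2
      have h8 : W * u^lam = Lam * (t-σ)^lam + K * (t-σ)^lam := by
        rw [hWdef, hudef]; ring
      have h9 := hint
      rw [h8]
      linarith
    set u0 : ℝ := (H / (2*W)) ^ (1/lam) with hu0def
    have hHW : (0:ℝ) < H / (2*W) := by positivity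
    have hu0 : 0 < u0 := Real.rpow_pos_of_pos hHW _
    have hu0lam : u0 ^ lam = H / (2*W) := by
      rw [hu0def, ← Real.rpow_mul hHW.le]
      have : 1/lam * lam = 1 := by field_simp
      rw [this, Real.rpow_one]
    rcases le_total u u0 with hc | hc
    · -- noise term small
      have h1 : u ^ lam ≤ u0 ^ lam := Real.rpow_le_rpow hu.le hc hlam0.le
      have h2 : W * u ^ lam ≤ H/2 := by
        rw [hu0lam] at h1
        calc W * u ^ lam ≤ W * (H / (2*W)) := mul_le_mul_of_nonneg_left h1 hW.le
          _ = H/2 := by field_simp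
      have hnn : 0 ≤ (t - σ) * (c2 / H^gam) := by positivity
      have : H/2 ≤ Y t - phi t := by
        have := hmain
        linarith
      linarith
    · -- drift dominates noise
      have h1 : u ^ (lam - 1) ≤ u0 ^ (lam - 1) :=
        Real.rpow_le_rpow_of_nonpos hu0 hc (by linarith)
      have h2 : u0 ^ (lam - 1) * H ^ gam * W ≤ c2 := by
        have e1 : u0 ^ (lam - 1) = (H/(2*W)) ^ ((lam-1)/lam) := by
          rw [hu0def, ← Real.rpow_mul hHW.le]
          congr 1
          field_simp
        have e2 : (H/(2*W)) ^ ((lam-1)/lam) = H ^ ((lam-1)/lam) * (2*W) ^ ((1-lam)/lam) := by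
          rw [Real.div_rpow hH.le (by positivity)]
          rw [div_eq_mul_inv, ← Real.rpow_neg (by positivity)]
          congr 2
          ring
        have e3 : H ^ ((lam-1)/lam) * H ^ gam = H ^ (q/lam) := by
          rw [← Real.rpow_add hH]
          congr 1
          rw [hqdef]
          field_simp
          ring
        calc u0 ^ (lam - 1) * H ^ gam * W
            = W * (2*W) ^ ((1-lam)/lam) * (H ^ ((lam-1)/lam) * H ^ gam) := by
              rw [e1, e2]; ring
          _ = W * (2*W) ^ ((1-lam)/lam) * H ^ (q/lam) := by rw [e3]
          _ ≤ c2 := hkey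
      have h3 : W * u ^ lam ≤ c2 / H^gam * u := by
        have e4 : u ^ lam = u ^ (lam - 1) * u := by
          rw [← Real.rpow_add_one hu.ne' (lam - 1)]
          ring_nf
        rw [e4]
        have hHg : 0 < H ^ gam := Real.rpow_pos_of_pos hH gam
        rw [div_mul_eq_mul_div, le_div_iff₀ hHg]
        calc W * (u ^ (lam - 1) * u) * H ^ gam
            = (u ^ (lam - 1) * H ^ gam * W) * u := by ring
          _ ≤ (u0 ^ (lam - 1) * H ^ gam * W) * u := by
              apply mul_le_mul_of_nonneg_right _ hu.le
              apply mul_le_mul_of_nonneg_right _ hW.le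
              exact mul_le_mul_of_nonneg_right h1 (Real.rpow_pos_of_pos hH gam).le
          _ ≤ c2 * u := mul_le_mul_of_nonneg_right h2 hu.le
      have : H ≤ Y t - phi t := by
        have h5 : (t - σ) * (c2 / H^gam) = c2 / H^gam * u := by rw [hudef]; ring
        linarith [hmain, h3, h5]
      linarith
  -- Step 2 : bounds for b along the path
  have hphiB : ∀ t ∈ Icc (0:ℝ) T, |phi t - phi 0| ≤ K * T^lam := by
    intro t ht
    refine (hphiH 0 h0T t ht).trans ?_
    have h1 : |t - 0| ^ lam ≤ T ^ lam := by
      apply Real.rpow_le_rpow (abs_nonneg _) _ hlam0.le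
      rw [sub_zero, abs_of_nonneg ht.1]; exact ht.2
    exact mul_le_mul_of_nonneg_left h1 hK.le
  have hphiabs : ∀ t ∈ Icc (0:ℝ) T, |phi t| ≤ P := by
    intro t ht
    have h1 := hphiB t ht
    have := abs_sub_abs_le_abs_sub (phi t) (phi 0)
    rw [hPdef]; linarith
  have hbref : ∀ t ∈ Icc (0:ℝ) T, |b t (phi t + ε0)| ≤ β1 := by
    intro t ht
    have h := hA2lip (ε0/2) (by positivity) (by linarith) t ht 0 h0T
      (phi t + ε0) (phi 0 + ε0) (by linarith) (by linarith)
    have h1 : |phi t + ε0 - (phi 0 + ε0)| = |phi t - phi 0| := by ring_nf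
    have h2 : |t - 0| ^ lam ≤ T ^ lam := by
      apply Real.rpow_le_rpow (abs_nonneg _) _ hlam0.le
      rw [sub_zero, abs_of_nonneg ht.1]; exact ht.2
    have h3 : |phi t - phi 0| + |t - 0|^lam ≤ K * T^lam + T^lam := by
      have := hphiB t ht; linarith
    have h4 : c1 / (ε0/2) ^ p * (|phi t + ε0 - (phi 0 + ε0)| + |t - 0| ^ lam)
        ≤ L0 * (K * T^lam + T^lam) := by
      rw [hL0def, h1]
      apply mul_le_mul_of_nonneg_left h3 (by positivity)
    have h5 : |b t (phi t + ε0)| ≤ |b 0 (phi 0 + ε0)| + |b t (phi t + ε0) - b 0 (phi 0 + ε0)| := by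
      have := abs_sub_abs_le_abs_sub (b t (phi t + ε0)) (b 0 (phi 0 + ε0))
      linarith [abs_nonneg (b 0 (phi 0 + ε0))]
    rw [hβ1def]
    linarith
  set aL : ℝ := β1 + L0*(P+1) + c1 * 4^p / H^p with haLdef
  have haL : 0 < aL := by rw [haLdef]; positivity
  have hgb : ∀ s ∈ Icc (0:ℝ) T, |g s| ≤ aL + L0 * |Y s| := by
    intro s hs
    have hfs := hbar s hs
    have hbulk : |g s| ≤ |b s (phi s + ε0)| + |b s (Y s) - b s (phi s + ε0)| := by
      have := abs_sub_abs_le_abs_sub (b s (Y s)) (b s (phi s + ε0))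
      rw [hgdef]
      simp only
      linarith [abs_nonneg (b s (phi s + ε0))]
    have hss : |s - s| ^ lam = 0 := by
      simp [Real.zero_rpow hlam0.ne']
    rcases le_total (Y s - phi s) ε0 with hcase | hcase
    · -- near the boundary
      have hA := hA2lip (H/4) (by positivity) (by linarith) s hs s hs
        (Y s) (phi s + ε0) (by linarith) (by linarith [hH])
      have h1 : |Y s - (phi s + ε0)| ≤ 1 := by
        rw [abs_le]
        constructor <;> [linarith [hε0le, hH]; linarith [hε0le, hH]]
      have h2 : c1 / (H/4) ^ p * (|Y s - (phi s + ε0)| + |s - s| ^ lam)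
          ≤ c1 * 4^p / H^p := by
        rw [hss, Real.div_rpow hH.le (by norm_num : (0:ℝ) ≤ 4)]
        have e : c1 / (H ^ p / 4 ^ p) = c1 * 4^p / H^p := by
          field_simp
        rw [e]
        have : |Y s - (phi s + ε0)| + 0 ≤ 1 := by linarith
        calc c1 * 4^p / H^p * (|Y s - (phi s + ε0)| + 0)
            ≤ c1 * 4^p / H^p * 1 := mul_le_mul_of_nonneg_left this (by positivity)
          _ = c1 * 4^p / H^p := mul_one _
      have := hbref s hs
      have hnn : 0 ≤ L0 * |Y s| := by positivity
      rw [haLdef]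
      calc |g s| ≤ |b s (phi s + ε0)| + |b s (Y s) - b s (phi s + ε0)| := hbulk
        _ ≤ β1 + c1 * 4^p / H^p := by linarith
        _ ≤ β1 + L0*(P+1) + c1 * 4^p / H^p + L0 * |Y s| := by
            have : 0 ≤ L0 * (P+1) := by positivity
            linarith
    · -- away from the boundary
      have hA := hA2lip (ε0/2) (by positivity) (by linarith) s hs s hs
        (Y s) (phi s + ε0) (by linarith) (by linarith)
      have h1 : |Y s - (phi s + ε0)| ≤ |Y s| + P + 1 := by
        have h2 : |Y s - (phi s + ε0)| ≤ |Y s| + |phi s + ε0| := abs_sub _ _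
        have h3 : |phi s + ε0| ≤ |phi s| + ε0 := by
          have := abs_add_le (phi s) ε0
          rwa [abs_of_pos hε0] at this
        have := hphiabs s hs
        linarith [hε0le]
      have h2 : c1 / (ε0/2) ^ p * (|Y s - (phi s + ε0)| + |s - s| ^ lam)
          ≤ L0 * (|Y s| + P + 1) := by
        rw [hss, hL0def]
        have : |Y s - (phi s + ε0)| + 0 ≤ |Y s| + P + 1 := by linarith
        apply mul_le_mul_of_nonneg_left this (by positivity)
      have := hbref s hs
      have hnn : 0 ≤ c1 * 4^p / H^p := by positivity
      rw [haLdef]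
      calc |g s| ≤ |b s (phi s + ε0)| + |b s (Y s) - b s (phi s + ε0)| := hbulk
        _ ≤ β1 + L0 * (|Y s| + P + 1) := by linarith
        _ = β1 + L0*(P+1) + L0 * |Y s| := by ring
        _ ≤ β1 + L0*(P+1) + c1 * 4^p / H^p + L0 * |Y s| := by linarith
  -- a priori bound on Y via Gronwall
  set c0 : ℝ := |Y0| + Lam * T^lam with hc0def
  have hc0 : 0 ≤ c0 := by rw [hc0def]; positivity
  set proj : ℝ → ℝ := fun s => max 0 (min s T) with hprojdef
  have hprojcont : Continuous proj := by
    rw [hprojdef]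
    exact continuous_const.max (continuous_id.min continuous_const)
  have hprojmem : ∀ s, proj s ∈ Icc (0:ℝ) T := by
    intro s
    constructor
    · exact le_max_left _ _
    · rw [hprojdef]
      simp only [max_le_iff]
      exact ⟨hT.le, min_le_right _ _⟩
  have hprojeq : ∀ s ∈ Icc (0:ℝ) T, proj s = s := by
    intro s hs
    rw [hprojdef]
    simp only [min_eq_left hs.2, max_eq_right hs.1]
  set w : ℝ → ℝ := fun s => aL + L0 * |Y (proj s)| with hwdef
  have hwcont : Continuous w := by
    rw [hwdef]
    have hYp : Continuous fun s => Y (proj s) := hYc.comp_continuous hprojcont hprojmem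
    exact continuous_const.add (continuous_const.mul hYp.abs)
  have hwnn : ∀ s, 0 ≤ w s := by
    intro s; rw [hwdef]; positivity
  set V : ℝ → ℝ := fun x => ∫ s in (0:ℝ)..x, w s with hVdef
  have hVderiv : ∀ x : ℝ, HasDerivAt V (w x) x := by
    intro x
    exact (hwcont.integral_hasStrictDerivAt 0 x).hasDerivAt
  have hVcont : Continuous V := by
    apply continuous_iff_continuousAt.2
    intro x
    exact (hVderiv x).continuousAt
  have hYleV : ∀ t ∈ Icc (0:ℝ) T, |Y t| ≤ c0 + V t := by
    intro t ht
    have h1 : |Y t| ≤ |Y0| + |∫ s in (0:ℝ)..t, g s| + |Z t| := by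
      rw [hYeq t ht]
      calc |Y0 + (∫ s in (0:ℝ)..t, g s) + Z t|
          ≤ |Y0 + (∫ s in (0:ℝ)..t, g s)| + |Z t| := abs_add_le _ _
        _ ≤ |Y0| + |∫ s in (0:ℝ)..t, g s| + |Z t| := by
            have := abs_add_le Y0 (∫ s in (0:ℝ)..t, g s); linarith
    have h2 : |Z t| ≤ Lam * T^lam := by
      have h3 := hZH 0 h0T t ht
      rw [hZ0, sub_zero, sub_zero] at h3
      refine h3.trans ?_
      have : |t| ^ lam ≤ T ^ lam := by
        apply Real.rpow_le_rpow (abs_nonneg _) _ hlam0.le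
        rw [abs_of_nonneg ht.1]; exact ht.2
      exact mul_le_mul_of_nonneg_left this hLam.le
    have h4 : |∫ s in (0:ℝ)..t, g s| ≤ V t := by
      have h5 : |∫ s in (0:ℝ)..t, g s| ≤ ∫ s in (0:ℝ)..t, |g s| :=
        intervalIntegral.abs_integral_le_integral_abs ht.1
      have h6 : (∫ s in (0:ℝ)..t, |g s|) ≤ ∫ s in (0:ℝ)..t, w s := by
        apply intervalIntegral.integral_mono_on ht.1
        · exact ((hgcont.mono (uIcc_subset_Icc h0T ht)).abs).intervalIntegrable
        · exact hwcont.intervalIntegrable _ _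
        · intro x hx
          have hxT : x ∈ Icc (0:ℝ) T := ⟨hx.1, hx.2.trans ht.2⟩
          have := hgb x hxT
          rw [hwdef]
          simp only
          rw [hprojeq x hxT]
          exact this
      rw [hVdef]
      exact h5.trans h6
    rw [hc0def]
    linarith
  have hVgron : ∀ x ∈ Icc (0:ℝ) T, V x ≤ gronwallBound 0 L0 (aL + L0 * c0) (x - 0) := by
    apply le_gronwallBound_of_liminf_deriv_right_le (f' := w)
    · exact hVcont.continuousOn
    · intro x _ r hr
      exact ((hVderiv x).hasDerivWithinAt.liminf_right_slope_le hr)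
    · rw [hVdef]; simp [intervalIntegral.integral_same]
    · intro x hx
      have hxT : x ∈ Icc (0:ℝ) T := ⟨hx.1, hx.2.le⟩
      have h1 : w x = aL + L0 * |Y x| := by
        rw [hwdef]; simp only; rw [hprojeq x hxT]
      have h2 := hYleV x hxT
      rw [h1]
      have : L0 * |Y x| ≤ L0 * (c0 + V x) := mul_le_mul_of_nonneg_left h2 hL0.le
      linarith
  set Bb : ℝ := (aL + L0 * c0) * (1 + Real.exp (L0 * T)) with hBbdef
  have hBb : 0 < Bb := by rw [hBbdef]; positivity
  have hgB : ∀ t ∈ Icc (0:ℝ) T, |g t| ≤ Bb := by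
    intro t ht
    have h1 := hgb t ht
    have h2 := hYleV t ht
    have h3 := hVgron t ht
    have h4 : gronwallBound 0 L0 (aL + L0 * c0) (t - 0) ≤ (aL + L0*c0)/L0 * Real.exp (L0*T) := by
      rw [gronwallBound_of_K_ne_0 hL0.ne']
      simp only [zero_mul, zero_add]
      have h5 : Real.exp (L0 * (t - 0)) ≤ Real.exp (L0 * T) := by
        apply Real.exp_le_exp.2
        have h5a : t - 0 ≤ T := by linarith [ht.2]
        exact mul_le_mul_of_nonneg_left h5a hL0.le
      have h6 : 0 ≤ (aL + L0*c0)/L0 := by positivity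
      calc (aL + L0 * c0) / L0 * (Real.exp (L0 * (t - 0)) - 1)
          ≤ (aL + L0 * c0) / L0 * Real.exp (L0 * (t - 0)) := by
            apply mul_le_mul_of_nonneg_left _ h6
            linarith
        _ ≤ (aL + L0*c0)/L0 * Real.exp (L0*T) := mul_le_mul_of_nonneg_left h5 h6
    have h7 : |Y t| ≤ c0 + (aL + L0*c0)/L0 * Real.exp (L0*T) := by linarith
    have h8 : L0 * |Y t| ≤ L0 * c0 + (aL + L0*c0) * Real.exp (L0*T) := by
      have he : L0 * ((aL + L0*c0)/L0 * Real.exp (L0*T)) = (aL + L0*c0) * Real.exp (L0*T) := by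
        field_simp
      calc L0 * |Y t| ≤ L0 * (c0 + (aL + L0*c0)/L0 * Real.exp (L0*T)) :=
            mul_le_mul_of_nonneg_left h7 hL0.le
        _ = L0*c0 + L0*((aL + L0*c0)/L0 * Real.exp (L0*T)) := by ring
        _ = L0*c0 + (aL + L0*c0) * Real.exp (L0*T) := by rw [he]
    rw [hBbdef]
    calc |g t| ≤ aL + L0 * |Y t| := h1
      _ ≤ aL + L0 * c0 + (aL + L0*c0) * Real.exp (L0*T) := by linarith
      _ = (aL + L0 * c0) * (1 + Real.exp (L0 * T)) := by ring
  -- Hölder estimate with coefficient Bb * T^(1-lam) + Lam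
  have hkey2 : ∀ s ∈ Icc (0:ℝ) T, ∀ t ∈ Icc (0:ℝ) T, s ≤ t →
      |Y t - Y s| ≤ (Bb * T^(1-lam) + Lam) * |t - s| ^ lam := by
    intro s hs t ht hst
    rcases eq_or_lt_of_le hst with he | hlt
    · rw [← he]
      simp [Real.zero_rpow hlam0.ne']
    · have habs : |t - s| = t - s := abs_of_pos (by linarith)
      have h1 : |Y t - Y s| ≤ |∫ u in s..t, g u| + |Z t - Z s| := by
        rw [hYdiff s hs t ht]
        exact abs_add_le _ _
      have h2 : |Z t - Z s| ≤ Lam * (t-s)^lam := by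
        have := hZH s hs t ht; rwa [habs] at this
      have h3 : |∫ u in s..t, g u| ≤ Bb * (t - s) := by
        have h4 : |∫ u in s..t, g u| ≤ ∫ u in s..t, |g u| :=
          intervalIntegral.abs_integral_le_integral_abs hst
        have h5 : (∫ u in s..t, |g u|) ≤ ∫ u in s..t, (Bb : ℝ) := by
          apply intervalIntegral.integral_mono_on hst
          · exact ((hgcont.mono (uIcc_subset_Icc hs ht)).abs).intervalIntegrable
          · exact intervalIntegrable_const
          · intro x hx
            exact hgB x ⟨hs.1.trans hx.1, hx.2.trans ht.2⟩
        have h6 : (∫ u in s..t, (Bb:ℝ)) = (t - s) * Bb := by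
          rw [intervalIntegral.integral_const, smul_eq_mul]
        linarith
      have h7 : t - s ≤ T^(1-lam) * (t-s)^lam := by
        have e1 : t - s = (t-s)^lam * (t-s)^(1-lam) := by
          rw [← Real.rpow_add (by linarith : (0:ℝ) < t - s)]
          simp
        have e2 : (t-s)^(1-lam) ≤ T^(1-lam) := by
          apply Real.rpow_le_rpow (by linarith) _ (by linarith)
          linarith [hs.1, ht.2]
        have e3 : 0 ≤ (t-s)^lam := Real.rpow_nonneg (by linarith) _
        calc t - s = (t-s)^lam * (t-s)^(1-lam) := e1
          _ ≤ (t-s)^lam * T^(1-lam) := mul_le_mul_of_nonneg_left e2 e3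
          _ = T^(1-lam) * (t-s)^lam := by ring
      have h8 : Bb * (t - s) ≤ Bb * (T^(1-lam) * (t-s)^lam) :=
        mul_le_mul_of_nonneg_left h7 hBb.le
      rw [habs]
      calc |Y t - Y s| ≤ Bb * (t-s) + Lam * (t-s)^lam := by linarith
        _ ≤ Bb * (T^(1-lam) * (t-s)^lam) + Lam * (t-s)^lam := by linarith
        _ = (Bb * T^(1-lam) + Lam) * (t-s)^lam := by ring
  -- bound the coefficient
  have hcoef : Bb * T^(1-lam) + Lam ≤ E1 + E2 * Lam^(p/q) + E3 * Lam := by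
    set N : ℝ := max Lam K with hNdef
    have hN : 0 < N := lt_of_lt_of_le hLam (le_max_left _ _)
    have hHbinv : 1/Hb ≤ cW * (K^(1/q) + Lam^(1/q)) := by
      have e1 : 1/Hb = ((W * (2*W) ^ ((1-lam)/lam)) / c2) ^ (lam/q) := by
        rw [hHbdef, one_div, ← Real.inv_rpow (by positivity), inv_div]
      have hD2 : W * (2*W) ^ ((1-lam)/lam) ≤ (2 * 4 ^ ((1-lam)/lam)) * N ^ (1/lam) := by
        have hW2N : W ≤ 2 * N := by
          rw [hWdef]
          have := le_max_left Lam K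
          have := le_max_right Lam K
          linarith
        have h2W : (2*W) ^ ((1-lam)/lam) ≤ (4*N) ^ ((1-lam)/lam) := by
          apply Real.rpow_le_rpow (by positivity) (by linarith)
            (div_nonneg (by linarith) hlam0.le)
        have h4N : (4*N) ^ ((1-lam)/lam) = 4 ^ ((1-lam)/lam) * N ^ ((1-lam)/lam) :=
          Real.mul_rpow (by norm_num) hN.le
        have hNN : N * N ^ ((1-lam)/lam) = N ^ (1/lam) := by
          nth_rewrite 1 [← Real.rpow_one N]
          rw [← Real.rpow_add hN]
          congr 1
          field_simp
          ring
        calc W * (2*W) ^ ((1-lam)/lam) ≤ (2*N) * ((4*N) ^ ((1-lam)/lam)) := by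
              apply mul_le_mul hW2N h2W (by positivity) (by positivity)
          _ = (2 * 4 ^ ((1-lam)/lam)) * (N * N ^ ((1-lam)/lam)) := by
              rw [h4N]; ring
          _ = (2 * 4 ^ ((1-lam)/lam)) * N ^ (1/lam) := by rw [hNN]
      have e2 : ((2 * 4 ^ ((1-lam)/lam)) * N ^ (1/lam) / c2) ^ (lam/q)
          = cW * N ^ (1/q) := by
        rw [hcWdef]
        rw [show (2 * 4 ^ ((1-lam)/lam)) * N ^ (1/lam) / c2
            = (2 * 4 ^ ((1-lam)/lam) / c2) * N ^ (1/lam) by ring]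
        rw [Real.mul_rpow (by positivity) (by positivity)]
        congr 1
        rw [← Real.rpow_mul hN.le]
        congr 1
        field_simp
      calc 1/Hb = ((W * (2*W) ^ ((1-lam)/lam)) / c2) ^ (lam/q) := e1
        _ ≤ ((2 * 4 ^ ((1-lam)/lam)) * N ^ (1/lam) / c2) ^ (lam/q) := by
            apply Real.rpow_le_rpow (by positivity) _ (div_nonneg hlam0.le hq.le)
            exact (div_le_div_iff_of_pos_right hc2).2 hD2
        _ = cW * N ^ (1/q) := e2
        _ ≤ cW * (K^(1/q) + Lam^(1/q)) := by
            apply mul_le_mul_of_nonneg_left _ hcW.le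
            have := my_max_rpow_le hLam.le hK.le (by positivity : (0:ℝ) ≤ 1/q)
            rw [hNdef]
            linarith
    have hHinv : 1/H ≤ J0 + cW * Lam^(1/q) := by
      have p1 : (0:ℝ) < 1/f0 := by positivity
      have p2 : (0:ℝ) < 1/ystar := by positivity
      have p4 : (0:ℝ) < 1/Hb := by positivity
      have hKq : (0:ℝ) ≤ cW * K^(1/q) := by positivity
      have hLq : (0:ℝ) ≤ cW * Lam^(1/q) := by positivity
      have h4 : 1/H ≤ 1/f0 + 1/ystar + 1 + 1/Hb := by
        rcases min_cases (min f0 ystar) (min 1 Hb) with ⟨h1, _⟩ | ⟨h1, _⟩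
        · rcases min_cases f0 ystar with ⟨h2, _⟩ | ⟨h2, _⟩
          · rw [hHdef, h1, h2]; linarith
          · rw [hHdef, h1, h2]; linarith
        · rcases min_cases (1:ℝ) Hb with ⟨h2, _⟩ | ⟨h2, _⟩
          · rw [hHdef, h1, h2, one_div_one]; linarith
          · rw [hHdef, h1, h2]; linarith
      rw [hJ0def]
      linarith
    have hHp : c1 * 4^p / H^p ≤ c1 * 8^p * J0^p + (c1 * 8^p * cW^p) * Lam^(p/q) := by
      have h1 : (1/H) ^ p ≤ (J0 + cW * Lam^(1/q)) ^ p :=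
        Real.rpow_le_rpow (by positivity) hHinv hp0.le
      have h2 : (J0 + cW * Lam^(1/q)) ^ p ≤ 2^p * (J0^p + (cW * Lam^(1/q))^p) :=
        my_add_rpow_le hJ0.le (by positivity) hp0.le
      have h3 : (cW * Lam^(1/q))^p = cW^p * Lam^(p/q) := by
        rw [Real.mul_rpow hcW.le (by positivity), ← Real.rpow_mul hLam.le]
        congr 2
        field_simp
      have h4 : (1/H) ^ p = 1 / H^p := by
        rw [one_div, Real.inv_rpow hH.le, one_div]
      have h5 : c1 * (4:ℝ)^p * 2^p = c1 * 8^p := by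
        rw [mul_assoc, ← Real.mul_rpow (by norm_num) (by norm_num)]
        norm_num
      have h6 : c1 * 4^p / H^p = c1 * 4^p * (1/H)^p := by
        rw [h4]; ring
      have h7 : (0:ℝ) ≤ c1 * 4^p := by positivity
      calc c1 * 4^p / H^p = c1 * 4^p * (1/H)^p := h6
        _ ≤ c1 * 4^p * ((J0 + cW * Lam^(1/q)) ^ p) := mul_le_mul_of_nonneg_left h1 h7
        _ ≤ c1 * 4^p * (2^p * (J0^p + (cW * Lam^(1/q))^p)) :=
            mul_le_mul_of_nonneg_left h2 h7
        _ = c1 * 8^p * J0^p + (c1 * 8^p * cW^p) * Lam^(p/q) := by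
            rw [h3, ← h5]; ring
    have haLb : aL + L0 * c0 ≤ (β1 + L0*(P+1) + c1*8^p*J0^p + L0*|Y0|)
        + (c1*8^p*cW^p) * Lam^(p/q) + (L0*T^lam) * Lam := by
      rw [haLdef, hc0def]
      have he : L0 * (|Y0| + Lam * T^lam) = L0*|Y0| + (L0*T^lam)*Lam := by ring
      linarith [hHp]
    have hBbX : Bb * T^(1-lam) = (aL + L0 * c0) * ((1 + Real.exp (L0*T)) * T^(1-lam)) := by
      rw [hBbdef]; ring
    have hXpos : (0:ℝ) ≤ (1 + Real.exp (L0*T)) * T^(1-lam) := by positivity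
    have hmul := mul_le_mul_of_nonneg_right haLb hXpos
    have hEeq : E1 + E2 * Lam^(p/q) + E3 * Lam
        = ((β1 + L0*(P+1) + c1*8^p*J0^p + L0*|Y0|)
            + (c1*8^p*cW^p) * Lam^(p/q) + (L0*T^lam) * Lam)
          * ((1 + Real.exp (L0*T)) * T^(1-lam)) + Lam := by
      rw [hE1def, hE2def, hE3def]; ring
    rw [hEeq, hBbX]
    linarith [hmul]
  -- conclude
  intro s hs t ht
  have hfinal : ∀ s' ∈ Icc (0:ℝ) T, ∀ t' ∈ Icc (0:ℝ) T, s' ≤ t' →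
      |Y t' - Y s'| ≤ (E1 + E2 + E3 + 1) *
        (1 + Lam ^ ((p + gam * lam + lam - 1) / (gam * lam + lam - 1))) * |t' - s'| ^ lam := by
    intro s' hs' t' ht' hle
    have h1 := hkey2 s' hs' t' ht' hle
    have h2 : (Bb * T^(1-lam) + Lam) ≤ (E1 + E2 + E3 + 1) *
        (1 + Lam ^ ((p + gam * lam + lam - 1) / q)) := by
      have hθ : (p + gam * lam + lam - 1) / q = (p + q)/q := by
        rw [hqdef]; ring_nf
      rw [hθ]
      have hpq1 : Lam ^ (p/q) ≤ 1 + Lam ^ ((p+q)/q) := by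
        apply my_rpow_le_one_add_rpow hLam (by positivity)
        exact (div_le_div_iff_of_pos_right hq).2 (by linarith)
      have hLam1 : Lam ≤ 1 + Lam ^ ((p+q)/q) := by
        have := my_rpow_le_one_add_rpow (θ := (p+q)/q) hLam (le_of_lt one_pos) (by
          rw [le_div_iff₀ hq]; linarith)
        rwa [Real.rpow_one] at this
      have hrp : 0 < Lam ^ ((p+q)/q) := Real.rpow_pos_of_pos hLam _
      have b1 : E2 * Lam^(p/q) ≤ E2 * (1 + Lam ^ ((p+q)/q)) :=
        mul_le_mul_of_nonneg_left hpq1 hE2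
      have b2 : E3 * Lam ≤ E3 * (1 + Lam ^ ((p+q)/q)) :=
        mul_le_mul_of_nonneg_left hLam1 hE3
      have hE1X : 0 ≤ E1 * Lam ^ ((p+q)/q) := mul_nonneg hE1 hrp.le
      have expand : (E1 + E2 + E3 + 1) * (1 + Lam ^ ((p+q)/q))
          = E1 + E2 + E3 + 1 + E1 * Lam ^ ((p+q)/q) + E2 * Lam ^ ((p+q)/q)
            + E3 * Lam ^ ((p+q)/q) + Lam ^ ((p+q)/q) := by ring
      have e1 : E2 * (1 + Lam ^ ((p+q)/q)) = E2 + E2 * Lam ^ ((p+q)/q) := by ring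
      have e2 : E3 * (1 + Lam ^ ((p+q)/q)) = E3 + E3 * Lam ^ ((p+q)/q) := by ring
      rw [expand]
      rw [e1] at b1
      rw [e2] at b2
      linarith [hcoef, b1, b2, hE1X, hrp.le]
    have hnn : 0 ≤ |t' - s'| ^ lam := Real.rpow_nonneg (abs_nonneg _) _
    calc |Y t' - Y s'| ≤ (Bb * T^(1-lam) + Lam) * |t' - s'| ^ lam := h1
      _ ≤ _ := mul_le_mul_of_nonneg_right h2 hnn
  rcases le_total s t with h | h
  · exact hfinal s hs t ht h
  · rw [abs_sub_comm, abs_sub_comm t s]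
    exact hfinal t ht s hs h
end

section
/- Under Assumptions (A1)–(A4), fix a noise path Z with Hölder constant Λ, let Y be the corresponding pathwise solution and, for each N with c3·Δ_N < 1, let Ŷ_N be the corresponding drift-implicit Euler scheme. Then for every r ≥ 1 there exists a constant 𝒞 > 0, independent of N, such that max_{k=0,…,N} |Y(t_k) − Ŷ_N(t_k)|^r ≤ 𝒞·Δ_N^{λr} for every N with c3·Δ_N < 1. -/
set_option maxHeartbeats 1000000

open MeasureTheory

private lemma aux_sq (c3 D e e' R bd : ℝ) (heq : e' = e + R + bd * D)
    (hD : 0 ≤ D) (hosl : bd * e' ≤ c3 * e' ^ 2) :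
    (1 - c3 * D) * |e'| ^ 2 ≤ (|e| + |R|) * |e'| := by
  have h2 : (e + R) * e' ≤ (|e| + |R|) * |e'| := by
    calc (e + R) * e' ≤ |(e + R) * e'| := le_abs_self _
      _ = |e + R| * |e'| := abs_mul _ _
      _ ≤ (|e| + |R|) * |e'| := mul_le_mul_of_nonneg_right (abs_add_le _ _) (abs_nonneg _)
  have h4 : e' ^ 2 = |e'| ^ 2 := (sq_abs e').symm
  have hmul : e' ^ 2 = (e + R) * e' + (bd * e') * D := by rw [heq]; ring
  rw [← h4]
  linarith only [hmul, h2, mul_le_mul_of_nonneg_right hosl hD]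

private lemma aux_step (c3 D A e e' R q : ℝ) (k : ℕ)
    (hApos : 0 < A) (hA1 : 1 ≤ A)
    (hAmul : A * (1 - c3 * D) = 1) (hq : 0 ≤ q)
    (hsq : (1 - c3 * D) * |e'| ^ 2 ≤ (|e| + |R|) * |e'|)
    (he : |e| ≤ q * k * A ^ k) (hR : |R| ≤ q) :
    |e'| ≤ q * (k + 1 : ℕ) * A ^ (k + 1) := by
  have hAk : 0 < A ^ k := pow_pos hApos k
  have hAk1 : A ≤ A ^ (k+1) := le_self_pow₀ hA1 (Nat.succ_ne_zero k)
  have hstep : |e'| ≤ A * (|e| + |R|) := by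
    rcases eq_or_lt_of_le (abs_nonneg e') with h | h
    · rw [← h]
      have : 0 ≤ A * (|e| + |R|) := by positivity
      linarith [abs_nonneg e, abs_nonneg R, this]
    · have h5 : (1 - c3 * D) * |e'| ≤ |e| + |R| := by nlinarith [hsq, h]
      calc |e'| = A * ((1 - c3 * D) * |e'|) := by rw [← mul_assoc, hAmul, one_mul]
        _ ≤ A * (|e| + |R|) := mul_le_mul_of_nonneg_left h5 hApos.le
  push_cast
  calc |e'| ≤ A * (|e| + |R|) := hstep
    _ ≤ A * (q * k * A ^ k + q) := by
        apply mul_le_mul_of_nonneg_left _ hApos.le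
        linarith [he, hR]
    _ = q * k * A ^ (k+1) + q * A := by rw [pow_succ]; ring
    _ ≤ q * k * A ^ (k+1) + q * A ^ (k+1) := by nlinarith [hAk1, hq]
    _ = q * ((k:ℝ) + 1) * A ^ (k+1) := by ring

private lemma aux_exp (x x0 : ℝ) (hx0 : 0 < x) (hx : x ≤ x0) (h1 : x0 < 1) :
    (1 - x)⁻¹ ≤ Real.exp ((1 - x0)⁻¹ * x) := by
  set M := (1 - x0)⁻¹ with hM
  have hMpos : 0 < M := inv_pos.2 (by linarith)
  have hMx0 : M * (1 - x0) = 1 := inv_mul_cancel₀ (by linarith)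
  have h2 : (1 - x)⁻¹ ≤ M * x + 1 := by
    rw [inv_le_iff_one_le_mul₀' (by linarith)]
    have h3 : 1 ≤ M * (1 - x) := by
      linarith only [hMx0, mul_nonneg hMpos.le (sub_nonneg.2 hx)]
    linarith only [mul_le_mul_of_nonneg_right h3 hx0.le]
  linarith [Real.add_one_le_exp (M * x)]

theorem stmt_15
    (T lam : ℝ) (hT : 0 < T) (hlam : lam ∈ Set.Ioo (0:ℝ) 1)
    (phi : ℝ → ℝ) (K : ℝ) (hK : 0 < K)
    (hphiH : ∀ s ∈ Set.Icc (0:ℝ) T, ∀ t ∈ Set.Icc (0:ℝ) T, |phi t - phi s| ≤ K * |t - s| ^ lam)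
    (b : ℝ → ℝ → ℝ) (c1 p c2 ystar gam : ℝ)
    (hc1 : 0 < c1) (hp : 1 < p) (hc2 : 0 < c2) (hystar : 0 < ystar)
    (hgam : 1 / lam - 1 < gam)
    (hA2cont : ContinuousOn (fun q : ℝ × ℝ => b q.1 q.2)
      {q : ℝ × ℝ | q.1 ∈ Set.Icc (0:ℝ) T ∧ phi q.1 < q.2})
    (hA2lip : ∀ ε : ℝ, 0 < ε → ε < 1 →
      ∀ t1 ∈ Set.Icc (0:ℝ) T, ∀ t2 ∈ Set.Icc (0:ℝ) T, ∀ y1 y2 : ℝ,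
        phi t1 + ε < y1 → phi t2 + ε < y2 →
        |b t1 y1 - b t2 y2| ≤ c1 / ε ^ p * (|y1 - y2| + |t1 - t2| ^ lam))
    (hA3 : ∀ t ∈ Set.Icc (0:ℝ) T, ∀ y : ℝ, phi t < y → y ≤ phi t + ystar →
      c2 / (y - phi t) ^ gam ≤ b t y)
    (Y0 : ℝ) (hA1 : phi 0 < Y0)
    (bp : ℝ → ℝ → ℝ) (c3 : ℝ) (hc3 : 0 < c3)
    (hA4deriv : ∀ t ∈ Set.Icc (0:ℝ) T, ∀ y : ℝ, phi t < y →
      HasDerivAt (fun x => b t x) (bp t y) y)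
    (hA4cont : ContinuousOn (fun q : ℝ × ℝ => bp q.1 q.2)
      {q : ℝ × ℝ | q.1 ∈ Set.Icc (0:ℝ) T ∧ phi q.1 < q.2})
    (hA4lt : ∀ t ∈ Set.Icc (0:ℝ) T, ∀ y : ℝ, phi t < y → bp t y < c3)
    (Z : ℝ → ℝ) (Lam : ℝ) (hLam : 0 < Lam) (hZ0 : Z 0 = 0)
    (hZH : ∀ s ∈ Set.Icc (0:ℝ) T, ∀ t ∈ Set.Icc (0:ℝ) T, |Z t - Z s| ≤ Lam * |t - s| ^ lam)
    (Y : ℝ → ℝ) (hYc : ContinuousOn Y (Set.Icc (0:ℝ) T))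
    (hYsand : ∀ t ∈ Set.Icc (0:ℝ) T, phi t < Y t)
    (hYeq : ∀ t ∈ Set.Icc (0:ℝ) T, Y t = Y0 + (∫ s in (0:ℝ)..t, b s (Y s)) + Z t)
    (Yh : ℕ → ℕ → ℝ) (hYh0 : ∀ N : ℕ, Yh N 0 = Y0)
    (hYhrec : ∀ N : ℕ, 0 < N → c3 * (T / (N : ℝ)) < 1 → ∀ k : ℕ, k < N →
      phi (((k : ℝ) + 1) * T / (N : ℝ)) < Yh N (k + 1) ∧
      Yh N (k + 1) = Yh N k + b (((k : ℝ) + 1) * T / (N : ℝ)) (Yh N (k + 1)) * (T / (N : ℝ))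
        + (Z (((k : ℝ) + 1) * T / (N : ℝ)) - Z ((k : ℝ) * T / (N : ℝ))))
    :
    ∀ r : ℝ, 1 ≤ r → ∃ C : ℝ, 0 < C ∧
      ∀ N : ℕ, 0 < N → c3 * (T / (N : ℝ)) < 1 →
        ∀ k : ℕ, k ≤ N →
          |Y ((k : ℝ) * T / (N : ℝ)) - Yh N k| ^ r ≤ C * (T / (N : ℝ)) ^ (lam * r) := by
  intro r hr
  obtain ⟨hlam0, hlam1⟩ := hlam
  have h0T : (0:ℝ) ∈ Set.Icc (0:ℝ) T := Set.left_mem_Icc.2 hT.le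
  -- continuity of phi on [0,T]
  have hphic : ContinuousOn phi (Set.Icc 0 T) := by
    intro s hs
    rw [ContinuousWithinAt, tendsto_iff_dist_tendsto_zero]
    have h1 : ContinuousAt (fun t : ℝ => K * |t - s| ^ lam) s :=
      ((Real.continuousAt_rpow_const _ _ (Or.inr hlam0.le)).comp
        ((continuous_abs.comp (continuous_id.sub continuous_const)).continuousAt)).const_mul K
    have h2 := h1.continuousWithinAt (s := Set.Icc (0:ℝ) T)
    rw [ContinuousWithinAt] at h2
    have h3 : Filter.Tendsto (fun t : ℝ => K * |t - s| ^ lam)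
        (nhdsWithin s (Set.Icc 0 T)) (nhds 0) := by
      simpa [Real.zero_rpow hlam0.ne'] using h2
    exact squeeze_zero' (Filter.Eventually.of_forall fun t => dist_nonneg)
      (Filter.eventually_of_mem self_mem_nhdsWithin fun t ht => by
        rw [Real.dist_eq]; exact hphiH s hs t ht) h3
  -- minimum distance of the solution from the boundary
  obtain ⟨ε, hεpos, hεlt1, hYeps⟩ : ∃ ε : ℝ, 0 < ε ∧ ε < 1 ∧
      ∀ s ∈ Set.Icc (0:ℝ) T, phi s + ε < Y s := by
    obtain ⟨t0, ht0, hmin⟩ := isCompact_Icc.exists_isMinOn (Set.nonempty_Icc.2 hT.le)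
      (hYc.sub hphic)
    have hε0 : 0 < Y t0 - phi t0 := sub_pos.2 (hYsand t0 ht0)
    refine ⟨min ((Y t0 - phi t0)/2) (1/2), lt_min (by linarith) (by norm_num),
      lt_of_le_of_lt (min_le_right _ _) (by norm_num), ?_⟩
    intro s hs
    have h1 : Y t0 - phi t0 ≤ Y s - phi s := hmin hs
    have h2 : min ((Y t0 - phi t0)/2) (1/2) ≤ (Y t0 - phi t0)/2 := min_le_left _ _
    linarith
  -- the drift along the solution
  set g : ℝ → ℝ := fun s => b s (Y s) with hgdef
  have hgc : ContinuousOn g (Set.Icc 0 T) := by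
    apply hA2cont.comp (continuousOn_id.prodMk hYc)
    intro s hs
    exact ⟨hs, hYsand s hs⟩
  have hint : ∀ a ∈ Set.Icc (0:ℝ) T, ∀ c ∈ Set.Icc (0:ℝ) T,
      IntervalIntegrable g volume a c := by
    intro a ha c hc
    exact (hgc.mono (Set.uIcc_subset_Icc ha hc)).intervalIntegrable
  have hYdiff : ∀ s ∈ Set.Icc (0:ℝ) T, ∀ t ∈ Set.Icc (0:ℝ) T,
      Y t - Y s = (∫ u in s..t, g u) + (Z t - Z s) := by
    intro s hs t ht
    have hadd := intervalIntegral.integral_add_adjacent_intervals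
      (hint 0 h0T s hs) (hint s hs t ht)
    rw [hYeq s hs, hYeq t ht]
    rw [hadd.symm]; ring
  -- Hölder continuity of Y
  obtain ⟨H, hHpos, hYH⟩ : ∃ H : ℝ, 0 < H ∧ ∀ s ∈ Set.Icc (0:ℝ) T, ∀ t ∈ Set.Icc (0:ℝ) T,
      |Y t - Y s| ≤ H * |t - s| ^ lam := by
    obtain ⟨B0, hB0⟩ := isCompact_Icc.exists_bound_of_continuousOn hgc
    set B := max B0 0 with hBdef
    have hB : ∀ s ∈ Set.Icc (0:ℝ) T, |g s| ≤ B := fun s hs =>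
      le_trans (hB0 s hs) (le_max_left _ _)
    have hBnn : 0 ≤ B := le_max_right _ _
    clear_value B
    refine ⟨B * T ^ (1 - lam) + Lam, add_pos_of_nonneg_of_pos
      (mul_nonneg hBnn (Real.rpow_pos_of_pos hT _).le) hLam, ?_⟩
    intro s hs t ht
    rw [hYdiff s hs t ht]
    have h1 : |∫ u in s..t, g u| ≤ B * |t - s| := by
      rw [← Real.norm_eq_abs]
      exact intervalIntegral.norm_integral_le_of_norm_le_const
        (fun x hx => hB x (Set.uIcc_subset_Icc hs ht (Set.uIoc_subset_uIcc hx)))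
    have hts : |t - s| ≤ T := by
      rw [abs_sub_le_iff]
      constructor <;>
        · obtain ⟨ha1, ha2⟩ := hs; obtain ⟨ha3, ha4⟩ := ht; linarith
    have h2 : |t - s| ≤ T ^ (1 - lam) * |t - s| ^ lam := by
      calc |t - s| = |t - s| ^ ((1 - lam) + lam) := by
            rw [show (1 - lam) + lam = 1 by ring, Real.rpow_one]
        _ = |t - s| ^ (1 - lam) * |t - s| ^ lam :=
            Real.rpow_add' (abs_nonneg _) (by norm_num)
        _ ≤ T ^ (1 - lam) * |t - s| ^ lam :=
            mul_le_mul_of_nonneg_right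
              (Real.rpow_le_rpow (abs_nonneg _) hts (by linarith))
              (Real.rpow_nonneg (abs_nonneg _) _)
    have h4 := mul_le_mul_of_nonneg_left h2 hBnn
    calc |(∫ u in s..t, g u) + (Z t - Z s)| ≤ |∫ u in s..t, g u| + |Z t - Z s| := abs_add_le _ _
      _ ≤ B * (T ^ (1-lam) * |t - s| ^ lam) + Lam * |t - s| ^ lam := by
          linarith [hZH s hs t ht]
      _ = (B * T ^ (1 - lam) + Lam) * |t - s| ^ lam := by ring
  -- one-sided Lipschitz property of b in space
  have hOSL : ∀ t ∈ Set.Icc (0:ℝ) T, ∀ y1 y2 : ℝ, phi t < y1 → phi t < y2 →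
      (b t y1 - b t y2) * (y1 - y2) ≤ c3 * (y1 - y2) ^ 2 := by
    have key : ∀ t ∈ Set.Icc (0:ℝ) T, ∀ y1 y2 : ℝ, phi t < y1 → phi t < y2 → y2 < y1 →
        (b t y1 - b t y2) * (y1 - y2) ≤ c3 * (y1 - y2) ^ 2 := by
      intro t ht y1 y2 h1 h2 hlt
      have hcont : ContinuousOn (fun x => b t x) (Set.Icc y2 y1) := fun x hx =>
        ((hA4deriv t ht x (lt_of_lt_of_le h2 hx.1)).differentiableAt.continuousAt).continuousWithinAt
      obtain ⟨c, hc, hceq⟩ := exists_hasDerivAt_eq_slope (fun x => b t x) (bp t) hlt hcont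
        (fun x hx => hA4deriv t ht x (h2.trans hx.1))
      have hlt3 : bp t c < c3 := hA4lt t ht c (h2.trans hc.1)
      have hne : y1 - y2 ≠ 0 := sub_ne_zero.2 (ne_of_gt hlt)
      rw [eq_div_iff hne] at hceq
      have hslope : b t y1 - b t y2 = bp t c * (y1 - y2) := by
        have h9 := hceq.symm
        simpa using h9
      rw [hslope]
      have h6 : bp t c * (y1 - y2) ^ 2 ≤ c3 * (y1 - y2) ^ 2 :=
        mul_le_mul_of_nonneg_right hlt3.le (sq_nonneg _)
      linarith only [h6, sq_nonneg (y1 - y2)]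
    intro t ht y1 y2 h1 h2
    rcases lt_trichotomy y2 y1 with h | h | h
    · exact key t ht y1 y2 h1 h2 h
    · simp [h]
    · linarith only [key t ht y2 y1 h2 h1 h]
  -- constants
  set CR := c1 / ε ^ p * (H + 1) with hCRdef
  have hCRpos : 0 < CR :=
    mul_pos (div_pos hc1 (Real.rpow_pos_of_pos hεpos _)) (by linarith only [hHpos])
  set x0 := c3 * T / ((⌊c3 * T⌋₊ : ℝ) + 1) with hx0def
  have hx0lt1 : x0 < 1 := by
    rw [hx0def, div_lt_one (by positivity)]
    exact Nat.lt_floor_add_one _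
  clear_value x0
  set M := (1 - x0)⁻¹ with hMdef
  clear_value M
  set C' := CR * T * Real.exp (c3 * T * M) with hC'def
  have hC'pos : 0 < C' := by
    rw [hC'def]
    exact mul_pos (mul_pos hCRpos hT) (Real.exp_pos _)
  clear_value C'
  refine ⟨C' ^ r, Real.rpow_pos_of_pos hC'pos r, ?_⟩
  intro N hN hNc k hkN
  have hNpos : (0:ℝ) < (N : ℝ) := Nat.cast_pos.2 hN
  set D := T / (N : ℝ) with hDdef
  have hD : 0 < D := by rw [hDdef]; exact div_pos hT hNpos
  have hND : (N : ℝ) * D = T := by rw [hDdef]; field_simp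
  clear_value D
  have hxlt1 : c3 * D < 1 := hNc
  have hNc2 : c3 * (T / (N : ℝ)) < 1 := by rw [← hDdef]; exact hNc
  have hxpos : 0 < c3 * D := mul_pos hc3 hD
  -- nodes lie in [0,T]
  have hnode : ∀ j : ℕ, j ≤ N → (j : ℝ) * T / (N : ℝ) ∈ Set.Icc (0:ℝ) T := by
    intro j hj
    constructor
    · positivity
    · rw [div_le_iff₀ hNpos]
      have h1 : (j : ℝ) ≤ (N : ℝ) := Nat.cast_le.2 hj
      have h2 := mul_le_mul_of_nonneg_right h1 hT.le
      linarith only [h1, h2]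
  set A := (1 - c3 * D)⁻¹ with hAdef
  have hApos : 0 < A := by
    rw [hAdef]; exact inv_pos.2 (by linarith only [hxlt1])
  have hA1 : 1 ≤ A := by
    rw [hAdef]
    exact (one_le_inv₀ (by linarith only [hxlt1])).mpr (by linarith only [hxpos])
  have hAmul : A * (1 - c3 * D) = 1 := by
    rw [hAdef]; exact inv_mul_cancel₀ (by linarith only [hxlt1])
  -- bound c3 * D by x0
  have hxle : c3 * D ≤ x0 := by
    have hN1 : ((⌊c3 * T⌋₊ : ℝ) + 1) ≤ (N : ℝ) := by
      have h3 := mul_lt_mul_of_pos_right hNc hNpos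
      rw [one_mul, mul_assoc] at h3
      rw [show D * (N:ℝ) = (N:ℝ) * D from mul_comm _ _, hND] at h3
      have h2 : ⌊c3 * T⌋₊ < N := by
        rw [Nat.floor_lt (by positivity)]
        exact h3
      exact_mod_cast h2
    have heq : c3 * D = c3 * T * ((N:ℝ))⁻¹ := by
      rw [show c3 * D = c3 * ((N:ℝ) * D) * ((N:ℝ))⁻¹ by field_simp, hND]
    rw [heq, hx0def, div_eq_mul_inv]
    apply mul_le_mul_of_nonneg_left _ (by positivity)
    apply inv_anti₀ (by positivity) hN1
  have hAle : A ≤ Real.exp (M * (c3 * D)) := by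
    rw [hAdef, hMdef]
    exact aux_exp (c3 * D) x0 hxpos hxle hx0lt1
  clear_value A
  -- main induction
  have hq0 : 0 ≤ CR * (D * D ^ lam) :=
    mul_nonneg hCRpos.le (mul_nonneg hD.le (Real.rpow_pos_of_pos hD _).le)
  have main : ∀ j : ℕ, j ≤ N →
      |Y ((j : ℝ) * T / (N : ℝ)) - Yh N j| ≤ CR * (D * D ^ lam) * j * A ^ j := by
    intro j
    induction j with
    | zero =>
      intro _
      have hY00 : Y 0 = Y0 := by
        rw [hYeq 0 h0T, intervalIntegral.integral_same, hZ0]; ring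
      norm_num [hYh0 N, hY00]
    | succ k ih =>
      intro hk1
      have hkN' : k < N := Nat.lt_of_succ_le hk1
      have hkle : k ≤ N := hkN'.le
      have ihk := ih hkle
      obtain ⟨hYhpos, hYhstep⟩ := hYhrec N hN hNc2 k hkN'
      rw [← hDdef] at hYhstep
      -- node abbreviations
      set tk := (k : ℝ) * T / (N : ℝ) with htkdef
      set tk1 := ((k : ℝ) + 1) * T / (N : ℝ) with htk1def
      have htkmem : tk ∈ Set.Icc (0:ℝ) T := hnode k hkle
      have htk1mem : tk1 ∈ Set.Icc (0:ℝ) T := by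
        have h1 := hnode (k+1) hk1
        rw [show (((k+1 : ℕ)) : ℝ) * T / (N : ℝ) = tk1 by rw [htk1def]; push_cast; ring] at h1
        exact h1
      have htkdiff : tk1 - tk = D := by
        rw [htkdef, htk1def, hDdef]; field_simp; ring
      have hcast : ((k+1 : ℕ) : ℝ) * T / (N : ℝ) = tk1 := by
        rw [htk1def]; push_cast; ring
      clear_value tk tk1
      have htkle : tk ≤ tk1 := by linarith only [htkdiff, hD]
      -- integral remainder bound
      have hRbound : |(∫ u in tk..tk1, g u) - b tk1 (Y tk1) * D|
          ≤ CR * (D * D ^ lam) := by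
        have hsub : (∫ u in tk..tk1, g u) - b tk1 (Y tk1) * D
            = ∫ u in tk..tk1, (g u - b tk1 (Y tk1)) := by
          rw [intervalIntegral.integral_sub (hint tk htkmem tk1 htk1mem)
            intervalIntegrable_const, intervalIntegral.integral_const, htkdiff,
            smul_eq_mul, mul_comm]
        rw [hsub, ← Real.norm_eq_abs]
        have hbnd : ∀ u ∈ Set.uIoc tk tk1, ‖g u - b tk1 (Y tk1)‖ ≤ CR * D ^ lam := by
          intro u hu
          have humem' : u ∈ Set.uIcc tk tk1 := Set.uIoc_subset_uIcc hu
          have humem : u ∈ Set.Icc (0:ℝ) T := Set.uIcc_subset_Icc htkmem htk1mem humem'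
          rw [Real.norm_eq_abs]
          have hlip := hA2lip ε hεpos hεlt1 u humem tk1 htk1mem (Y u) (Y tk1)
            (hYeps u humem) (hYeps tk1 htk1mem)
          have hdist : |u - tk1| ≤ D := by
            rw [Set.uIcc_of_le htkle, Set.mem_Icc] at humem'
            rw [abs_le]
            constructor
            · linarith only [humem'.1, htkdiff]
            · linarith only [humem'.2, hD]
          have hdistl : |u - tk1| ^ lam ≤ D ^ lam :=
            Real.rpow_le_rpow (abs_nonneg _) hdist hlam0.le
          have hYHl : |Y u - Y tk1| ≤ H * |u - tk1| ^ lam := hYH tk1 htk1mem u humem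
          have hcd : 0 < c1 / ε ^ p := div_pos hc1 (Real.rpow_pos_of_pos hεpos _)
          calc |g u - b tk1 (Y tk1)| = |b u (Y u) - b tk1 (Y tk1)| := rfl
            _ ≤ c1 / ε ^ p * (|Y u - Y tk1| + |u - tk1| ^ lam) := hlip
            _ ≤ c1 / ε ^ p * (H * (D ^ lam) + D ^ lam) := by
                apply mul_le_mul_of_nonneg_left _ hcd.le
                have h5 : H * |u - tk1| ^ lam ≤ H * D ^ lam :=
                  mul_le_mul_of_nonneg_left hdistl hHpos.le
                linarith only [h5, hYHl, hdistl]
            _ = CR * D ^ lam := by rw [hCRdef]; ring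
        calc ‖∫ u in tk..tk1, (g u - b tk1 (Y tk1))‖
            ≤ CR * D ^ lam * |tk1 - tk| :=
              intervalIntegral.norm_integral_le_of_norm_le_const hbnd
          _ = CR * (D * D ^ lam) := by rw [htkdiff, abs_of_pos hD]; ring
      -- error recursion
      have hosl := hOSL tk1 htk1mem (Y tk1) (Yh N (k+1)) (hYsand tk1 htk1mem) hYhpos
      have hYstep : Y tk1 - Y tk = (∫ u in tk..tk1, g u) + (Z tk1 - Z tk) :=
        hYdiff tk htkmem tk1 htk1mem
      set e := Y tk - Yh N k with hedef
      set e' := Y tk1 - Yh N (k+1) with he'def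
      set R := (∫ u in tk..tk1, g u) - b tk1 (Y tk1) * D with hRdef
      clear_value e e' R
      have hrec : e' = e + R + (b tk1 (Y tk1) - b tk1 (Yh N (k+1))) * D := by
        linarith only [hYstep, hYhstep, hedef, he'def, hRdef]
      have hsq := aux_sq c3 D e e' R _ hrec hD.le hosl
      have hgoal := aux_step c3 D A e e' R (CR * (D * D ^ lam)) k
        hApos hA1 hAmul hq0 hsq ihk hRbound
      rw [hcast, ← he'def]
      exact hgoal
  -- conclusion: uniform bound over the grid
  have hAN : A ^ N ≤ Real.exp (c3 * T * M) := by
    calc A ^ N ≤ Real.exp (M * (c3 * D)) ^ N := pow_le_pow_left₀ hApos.le hAle N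
      _ = Real.exp ((N:ℝ) * (M * (c3 * D))) := (Real.exp_nat_mul _ N).symm
      _ = Real.exp (c3 * T * M) := by
          rw [show (N:ℝ) * (M * (c3 * D)) = c3 * ((N:ℝ) * D) * M by ring, hND]
  have hmainK := main k hkN
  have hfin : |Y ((k : ℝ) * T / (N : ℝ)) - Yh N k| ≤ C' * D ^ lam := by
    have h1 : (k : ℝ) * A ^ k ≤ (N : ℝ) * A ^ N :=
      mul_le_mul (Nat.cast_le.2 hkN) (pow_le_pow_right₀ hA1 hkN)
        (pow_pos hApos k).le (Nat.cast_nonneg N)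
    have h2 : CR * (D * D ^ lam) * k * A ^ k ≤ CR * (D * D ^ lam) * N * A ^ N := by
      have h3 := mul_le_mul_of_nonneg_left h1 hq0
      calc CR * (D * D ^ lam) * (k:ℝ) * A ^ k = CR * (D * D ^ lam) * ((k:ℝ) * A ^ k) := by ring
        _ ≤ CR * (D * D ^ lam) * ((N:ℝ) * A ^ N) := h3
        _ = CR * (D * D ^ lam) * (N:ℝ) * A ^ N := by ring
    have h4 : CR * (D * D ^ lam) * (N:ℝ) * A ^ N ≤ C' * D ^ lam := by
      have h5 : CR * (D * D ^ lam) * (N:ℝ) * A ^ N = CR * T * D ^ lam * A ^ N := by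
        rw [show CR * (D * D ^ lam) * (N:ℝ) = CR * ((N:ℝ) * D) * D ^ lam by ring, hND]
      rw [h5, hC'def]
      have h6 : 0 ≤ CR * T * D ^ lam :=
        mul_nonneg (mul_nonneg hCRpos.le hT.le) (Real.rpow_pos_of_pos hD _).le
      calc CR * T * D ^ lam * A ^ N ≤ CR * T * D ^ lam * Real.exp (c3 * T * M) :=
            mul_le_mul_of_nonneg_left hAN h6
        _ = CR * T * Real.exp (c3 * T * M) * D ^ lam := by ring
    linarith only [hmainK, h2, h4]
  have hr0 : (0:ℝ) ≤ r := le_trans zero_le_one hr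
  have hfinal := Real.rpow_le_rpow (abs_nonneg _) hfin hr0
  rw [Real.mul_rpow hC'pos.le (Real.rpow_pos_of_pos hD _).le] at hfinal
  rw [← Real.rpow_mul hD.le] at hfinal
  exact hfinal
end

section
/- Under Assumptions (A1)–(A4), fix a noise path Z with Hölder constant Λ, let Y be the corresponding pathwise solution and, for each N with max{c3, c1/(Y(0) − φ(0))^p}·Δ_N < 1, let Ŷ_N be the corresponding drift-implicit Euler scheme extended to [0,T] by Ŷ_N(t) := Ŷ_N(t_k) for t ∈ [t_k, t_{k+1}). Then for every r ≥ 1 there exists a constant 𝒞 > 0, independent of N, such that sup_{t∈[0,T]} |Y(t) − Ŷ_N(t)|^r ≤ 𝒞·Δ_N^{λr} for every such N. -/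
open MeasureTheory

private lemma aux_exp16 {x : ℝ} (h0 : 0 ≤ x) (h12 : x ≤ 1/2) : (1-x)⁻¹ ≤ Real.exp (2*x) := by
  have h1 : 0 < 1 - x := by linarith
  rw [inv_eq_one_div, div_le_iff₀ h1]
  nlinarith [Real.add_one_le_exp (2*x), mul_nonneg h0 (by linarith : (0:ℝ) ≤ 1 - 2*x)]

private lemma aux_rec16 {e ep R D c3 Δ : ℝ} (hΔ : 0 ≤ Δ) (h1 : 0 < 1 - c3*Δ)
    (heid : e = ep + R + D*Δ) (hone : D*e ≤ c3*e^2) : |e| * (1-c3*Δ) ≤ |ep| + |R| := by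
  rcases eq_or_lt_of_le (abs_nonneg e) with h0 | h0
  · rw [← h0, zero_mul]; positivity
  · have hsq : e*e*(1-c3*Δ) ≤ |e| * (|ep| + |R|) := by
      have h1' : e * (ep+R) ≤ |e| * (|ep| + |R|) := by
        calc e * (ep+R) ≤ |e * (ep+R)| := le_abs_self _
        _ = |e| * |ep+R| := abs_mul _ _
        _ ≤ |e| * (|ep| + |R|) := mul_le_mul_of_nonneg_left (abs_add_le _ _) (abs_nonneg _)
      have h2 : D*e*Δ ≤ c3*e^2*Δ := mul_le_mul_of_nonneg_right hone hΔ
      have hid2 : e*e = e * (ep+R) + D*e*Δ := by rw [heid]; ring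
      nlinarith [h1', h2, hid2]
    have h2 : |e| * (|e| * (1-c3*Δ)) ≤ |e| * (|ep| + |R|) := by
      calc |e| * (|e| * (1-c3*Δ)) = e*e*(1-c3*Δ) := by
            rw [← abs_mul_abs_self e]; ring
      _ ≤ |e| * (|ep| + |R|) := hsq
    exact le_of_mul_le_mul_left h2 h0

set_option maxHeartbeats 1000000 in
theorem stmt_16
    (T lam : ℝ) (hT : 0 < T) (hlam : lam ∈ Set.Ioo (0:ℝ) 1)
    (phi : ℝ → ℝ) (K : ℝ) (hK : 0 < K)
    (hphiH : ∀ s ∈ Set.Icc (0:ℝ) T, ∀ t ∈ Set.Icc (0:ℝ) T, |phi t - phi s| ≤ K * |t - s| ^ lam)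
    (b : ℝ → ℝ → ℝ) (c1 p c2 ystar gam : ℝ)
    (hc1 : 0 < c1) (hp : 1 < p) (hc2 : 0 < c2) (hystar : 0 < ystar)
    (hgam : 1 / lam - 1 < gam)
    (hA2cont : ContinuousOn (fun q : ℝ × ℝ => b q.1 q.2)
      {q : ℝ × ℝ | q.1 ∈ Set.Icc (0:ℝ) T ∧ phi q.1 < q.2})
    (hA2lip : ∀ ε : ℝ, 0 < ε → ε < 1 →
      ∀ t1 ∈ Set.Icc (0:ℝ) T, ∀ t2 ∈ Set.Icc (0:ℝ) T, ∀ y1 y2 : ℝ,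
        phi t1 + ε < y1 → phi t2 + ε < y2 →
        |b t1 y1 - b t2 y2| ≤ c1 / ε ^ p * (|y1 - y2| + |t1 - t2| ^ lam))
    (hA3 : ∀ t ∈ Set.Icc (0:ℝ) T, ∀ y : ℝ, phi t < y → y ≤ phi t + ystar →
      c2 / (y - phi t) ^ gam ≤ b t y)
    (Y0 : ℝ) (hA1 : phi 0 < Y0)
    (bp : ℝ → ℝ → ℝ) (c3 : ℝ) (hc3 : 0 < c3)
    (hA4deriv : ∀ t ∈ Set.Icc (0:ℝ) T, ∀ y : ℝ, phi t < y →
      HasDerivAt (fun x => b t x) (bp t y) y)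
    (hA4cont : ContinuousOn (fun q : ℝ × ℝ => bp q.1 q.2)
      {q : ℝ × ℝ | q.1 ∈ Set.Icc (0:ℝ) T ∧ phi q.1 < q.2})
    (hA4lt : ∀ t ∈ Set.Icc (0:ℝ) T, ∀ y : ℝ, phi t < y → bp t y < c3)
    (Z : ℝ → ℝ) (Lam : ℝ) (hLam : 0 < Lam) (hZ0 : Z 0 = 0)
    (hZH : ∀ s ∈ Set.Icc (0:ℝ) T, ∀ t ∈ Set.Icc (0:ℝ) T, |Z t - Z s| ≤ Lam * |t - s| ^ lam)
    (Y : ℝ → ℝ) (hYc : ContinuousOn Y (Set.Icc (0:ℝ) T))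
    (hYsand : ∀ t ∈ Set.Icc (0:ℝ) T, phi t < Y t)
    (hYeq : ∀ t ∈ Set.Icc (0:ℝ) T, Y t = Y0 + (∫ s in (0:ℝ)..t, b s (Y s)) + Z t)
    (Yh : ℕ → ℕ → ℝ) (hYh0 : ∀ N : ℕ, Yh N 0 = Y0)
    (hYhrec : ∀ N : ℕ, 0 < N → max c3 (c1 / (Y0 - phi 0) ^ p) * (T / (N : ℝ)) < 1 → ∀ k : ℕ, k < N →
      phi (((k : ℝ) + 1) * T / (N : ℝ)) < Yh N (k + 1) ∧
      Yh N (k + 1) = Yh N k + b (((k : ℝ) + 1) * T / (N : ℝ)) (Yh N (k + 1)) * (T / (N : ℝ))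
        + (Z (((k : ℝ) + 1) * T / (N : ℝ)) - Z ((k : ℝ) * T / (N : ℝ))))
    :
    ∀ r : ℝ, 1 ≤ r → ∃ C : ℝ, 0 < C ∧
      ∀ N : ℕ, 0 < N → max c3 (c1 / (Y0 - phi 0) ^ p) * (T / (N : ℝ)) < 1 →
        ∀ t ∈ Set.Icc (0:ℝ) T,
          |Y t - Yh N (min N ⌊t * (N : ℝ) / T⌋₊)| ^ r ≤ C * (T / (N : ℝ)) ^ (lam * r) := by
  obtain ⟨hlam0, hlam1⟩ := hlam
  intro r hr
  have hIcc0 : (0:ℝ) ∈ Set.Icc (0:ℝ) T := ⟨le_refl 0, hT.le⟩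
  -- phi is continuous on [0,T]
  have hphic : ContinuousOn phi (Set.Icc (0:ℝ) T) := by
    intro t ht
    have hcont : ContinuousAt (fun x : ℝ => K * |x - t| ^ lam) t := by
      have h2 : ContinuousAt (fun x : ℝ => |x - t|) t :=
        (continuous_abs.comp (continuous_id.sub continuous_const)).continuousAt
      exact continuousAt_const.mul (h2.rpow_const (Or.inr hlam0.le))
    have h0 : Filter.Tendsto (fun x : ℝ => K * |x - t| ^ lam)
        (nhdsWithin t (Set.Icc 0 T)) (nhds 0) := by
      have := (hcont.continuousWithinAt (s := Set.Icc (0:ℝ) T)).tendsto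
      simpa [Real.zero_rpow hlam0.ne'] using this
    have : Filter.Tendsto phi (nhdsWithin t (Set.Icc 0 T)) (nhds (phi t)) := by
      rw [tendsto_iff_dist_tendsto_zero]
      refine squeeze_zero' (Filter.Eventually.of_forall fun x => dist_nonneg) ?_ h0
      filter_upwards [self_mem_nhdsWithin] with x hx
      rw [Real.dist_eq]
      exact hphiH t ht x hx
    exact this
  -- minimum distance of Y to the boundary
  obtain ⟨t0, ht0, hmin⟩ := isCompact_Icc.exists_isMinOn (s := Set.Icc (0:ℝ) T)
    ⟨0, hIcc0⟩ (hYc.sub hphic)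
  set εY : ℝ := Y t0 - phi t0 with hεYdef
  have hεYpos : 0 < εY := sub_pos.2 (hYsand t0 ht0)
  have hεYle : ∀ t ∈ Set.Icc (0:ℝ) T, εY ≤ Y t - phi t := fun t ht => hmin ht
  -- the drift along the solution is continuous, hence bounded
  set fY : ℝ → ℝ := fun s => b s (Y s) with hfYdef
  have hfYc : ContinuousOn fY (Set.Icc (0:ℝ) T) := by
    have hmap : Set.MapsTo (fun s : ℝ => (s, Y s)) (Set.Icc (0:ℝ) T)
        {q : ℝ × ℝ | q.1 ∈ Set.Icc (0:ℝ) T ∧ phi q.1 < q.2} := fun s hs => ⟨hs, hYsand s hs⟩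
    exact hA2cont.comp (continuousOn_id.prodMk hYc) hmap
  obtain ⟨M, hM⟩ := isCompact_Icc.exists_bound_of_continuousOn hfYc
  have hM0 : 0 ≤ M := le_trans (norm_nonneg _) (hM 0 hIcc0)
  -- integrability
  have hInt : ∀ a ∈ Set.Icc (0:ℝ) T, ∀ b' ∈ Set.Icc (0:ℝ) T,
      IntervalIntegrable fY volume a b' := by
    intro a ha b' hb'
    exact ContinuousOn.intervalIntegrable
      (hfYc.mono (Set.uIcc_subset_Icc ⟨ha.1, ha.2⟩ ⟨hb'.1, hb'.2⟩))
  -- increment formula for Y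
  have hYinc : ∀ a ∈ Set.Icc (0:ℝ) T, ∀ b' ∈ Set.Icc (0:ℝ) T,
      Y b' - Y a = (∫ s in a..b', fY s) + (Z b' - Z a) := by
    intro a ha b' hb'
    have h1 := hYeq b' hb'
    have h2 := hYeq a ha
    have h3 := intervalIntegral.integral_interval_sub_left
      (hInt 0 hIcc0 b' hb') (hInt 0 hIcc0 a ha)
    simp only [hfYdef] at h3 ⊢
    linarith [h3]
  -- Hölder continuity of Y
  set H : ℝ := M * T ^ (1 - lam) + Lam with hHdef
  have hH0 : 0 < H := by positivity
  have hYH : ∀ a ∈ Set.Icc (0:ℝ) T, ∀ b' ∈ Set.Icc (0:ℝ) T, a ≤ b' →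
      |Y b' - Y a| ≤ H * (b' - a) ^ lam := by
    intro a ha b' hb' hab
    rcases eq_or_lt_of_le hab with rfl | hab'
    · simp [Real.zero_rpow hlam0.ne']
    have hba : 0 < b' - a := sub_pos.2 hab'
    have hZb : |Z b' - Z a| ≤ Lam * (b' - a) ^ lam := by
      have := hZH a ha b' hb'
      rwa [abs_of_pos hba] at this
    have hIb : |∫ s in a..b', fY s| ≤ M * |b' - a| := by
      have := intervalIntegral.norm_integral_le_of_norm_le_const (C := M) (a := a) (b := b')
        (f := fY) (fun x hx => by
          refine hM x ?_
          rw [Set.uIoc_of_le hab] at hx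
          exact ⟨le_trans ha.1 hx.1.le, le_trans hx.2 hb'.2⟩)
      simpa [Real.norm_eq_abs] using this
    have hsplit : (b' - a) ≤ T ^ (1 - lam) * (b' - a) ^ lam := by
      have h1 : (b' - a) ^ (1 - lam) ≤ T ^ (1 - lam) :=
        Real.rpow_le_rpow hba.le (by linarith [ha.1, hb'.2]) (by linarith)
      have h2 : (b' - a) = (b' - a) ^ (1 - lam) * (b' - a) ^ lam := by
        rw [← Real.rpow_add hba]
        norm_num
      calc (b' - a) = (b' - a) ^ (1 - lam) * (b' - a) ^ lam := h2
      _ ≤ T ^ (1 - lam) * (b' - a) ^ lam :=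
        mul_le_mul_of_nonneg_right h1 (Real.rpow_nonneg hba.le lam)
    have h4 := hYinc a ha b' hb'
    have h5 : |Y b' - Y a| ≤ |∫ s in a..b', fY s| + |Z b' - Z a| := by
      rw [h4]; exact abs_add_le _ _
    rw [abs_of_pos hba] at hIb
    calc |Y b' - Y a| ≤ M * (b' - a) + Lam * (b' - a) ^ lam := by linarith
    _ ≤ M * (T ^ (1 - lam) * (b' - a) ^ lam) + Lam * (b' - a) ^ lam :=
        by linarith [mul_le_mul_of_nonneg_left hsplit hM0]
    _ = H * (b' - a) ^ lam := by rw [hHdef]; ring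
  -- one-sided Lipschitz property from (A4)
  have oneside : ∀ t ∈ Set.Icc (0:ℝ) T, ∀ y1 y2 : ℝ, phi t < y1 → phi t < y2 →
      (b t y1 - b t y2) * (y1 - y2) ≤ c3 * (y1 - y2) ^ 2 := by
    have main : ∀ t ∈ Set.Icc (0:ℝ) T, ∀ y1 y2 : ℝ, phi t < y1 → phi t < y2 → y2 < y1 →
        b t y1 - b t y2 ≤ c3 * (y1 - y2) := by
      intro t ht y1 y2 h1 h2 hlt
      have hcont : ContinuousOn (fun x => b t x) (Set.Icc y2 y1) := fun x hx =>
        ((hA4deriv t ht x (lt_of_lt_of_le h2 hx.1)).continuousAt).continuousWithinAt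
      have hderiv : ∀ x ∈ Set.Ioo y2 y1, HasDerivAt (fun x => b t x) (bp t x) x :=
        fun x hx => hA4deriv t ht x (h2.trans hx.1)
      obtain ⟨c, hc, hceq⟩ := exists_hasDerivAt_eq_slope (fun x => b t x) (fun x => bp t x)
        hlt hcont hderiv
      have hlt3 : bp t c < c3 := hA4lt t ht c (h2.trans hc.1)
      have hy : 0 < y1 - y2 := sub_pos.2 hlt
      have : b t y1 - b t y2 = bp t c * (y1 - y2) := by
        rw [hceq]; field_simp
      rw [this]
      exact mul_le_mul_of_nonneg_right hlt3.le hy.le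
    intro t ht y1 y2 h1 h2
    rcases lt_trichotomy y1 y2 with h | h | h
    · have h4 := mul_le_mul_of_nonneg_right (main t ht y2 y1 h2 h1 h)
        (by linarith : (0:ℝ) ≤ y2 - y1)
      calc (b t y1 - b t y2) * (y1 - y2) = (b t y2 - b t y1) * (y2 - y1) := by ring
      _ ≤ c3 * (y2 - y1) * (y2 - y1) := h4
      _ = c3 * (y1 - y2) ^ 2 := by ring
    · subst h; simp
    · have h4 := mul_le_mul_of_nonneg_right (main t ht y1 y2 h1 h2 h)
        (by linarith : (0:ℝ) ≤ y1 - y2)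
      calc (b t y1 - b t y2) * (y1 - y2) ≤ c3 * (y1 - y2) * (y1 - y2) := h4
      _ = c3 * (y1 - y2) ^ 2 := by ring
  -- Lipschitz constants
  set ε : ℝ := min εY 1 / 2 with hεdef
  have hε0 : 0 < ε := by positivity
  have hε1 : ε < 1 := by
    have : min εY 1 ≤ 1 := min_le_right _ _
    simp only [hεdef]; linarith
  have hεY' : ∀ t ∈ Set.Icc (0:ℝ) T, phi t + ε < Y t := by
    intro t ht
    have h1 := hεYle t ht
    have h2 : ε < εY := by
      have : min εY 1 ≤ εY := min_le_left _ _
      simp only [hεdef]; linarith [lt_min hεYpos one_pos]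
    linarith
  set L : ℝ := c1 / ε ^ p with hLdef
  have hL0 : 0 < L := div_pos hc1 (Real.rpow_pos_of_pos hε0 p)
  set A : ℝ := L * (H + 1) with hAdef
  have hA0 : 0 < A := by positivity
  -- the Gronwall-type constant
  set E : ℝ := max (Real.exp (2 * c3 * T))
    ((Finset.range (⌈2 * c3 * T⌉₊ + 1)).sup' ⟨0, Finset.mem_range.2 (Nat.succ_pos _)⟩
      (fun n => ((1 - c3 * (T / (n : ℝ)))⁻¹) ^ n)) with hEdef
  have hE0 : 0 < E := lt_of_lt_of_le (Real.exp_pos _) (le_max_left _ _)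
  set C1 : ℝ := H + A * T * E + 1 with hC1def
  have hC11 : 1 ≤ C1 := by
    have h1 : 0 ≤ A * T * E := mul_nonneg (mul_nonneg hA0.le hT.le) hE0.le
    rw [hC1def]; linarith
  have hC10 : 0 < C1 := by linarith
  refine ⟨C1 ^ r, Real.rpow_pos_of_pos hC10 r, ?_⟩
  intro N hN hcond t ht
  have hNR : 0 < (N : ℝ) := Nat.cast_pos.2 hN
  set Δ : ℝ := T / (N : ℝ) with hΔdef
  have hΔ0 : 0 < Δ := div_pos hT hNR
  have hc3Δ : c3 * Δ < 1 :=
    lt_of_le_of_lt (mul_le_mul_of_nonneg_right (le_max_left _ _) hΔ0.le) hcond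
  have h1mΔ : 0 < 1 - c3 * Δ := by linarith
  set q : ℝ := (1 - c3 * Δ)⁻¹ with hqdef
  have hq0 : 0 < q := inv_pos.2 h1mΔ
  have hq1 : 1 ≤ q := by
    rw [hqdef]
    exact one_le_inv_iff₀.mpr ⟨h1mΔ, by linarith [mul_pos hc3 hΔ0]⟩
  -- q^N ≤ E
  have hqE : q ^ N ≤ E := by
    rcases le_or_gt N (⌈2 * c3 * T⌉₊) with hN0 | hN0
    · refine le_trans ?_ (le_max_right _ _)
      have := Finset.le_sup' (fun n : ℕ => ((1 - c3 * (T / (n : ℝ)))⁻¹) ^ n)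
        (Finset.mem_range.2 (Nat.lt_succ_of_le hN0) : N ∈ Finset.range (⌈2 * c3 * T⌉₊ + 1))
      simpa [hqdef, hΔdef] using this
    · refine le_trans ?_ (le_max_left _ _)
      have hge : 2 * c3 * T ≤ (N : ℝ) := by
        refine le_trans (Nat.le_ceil _) ?_
        exact_mod_cast hN0.le
      have hx12 : c3 * Δ ≤ 1 / 2 := by
        rw [hΔdef]
        rw [mul_div_assoc' c3 T (N:ℝ), div_le_div_iff₀ hNR two_pos]
        linarith
      have hx0 : 0 ≤ c3 * Δ := by positivity
      have hq' : q ≤ Real.exp (2 * (c3 * Δ)) := by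
        rw [hqdef]
        exact aux_exp16 hx0 hx12
      calc q ^ N ≤ (Real.exp (2 * (c3 * Δ))) ^ N := pow_le_pow_left₀ hq0.le hq' N
      _ = Real.exp ((N : ℝ) * (2 * (c3 * Δ))) := (Real.exp_nat_mul _ N).symm
      _ = Real.exp (2 * c3 * T) := by
          congr 1
          rw [hΔdef]
          field_simp
  -- grid points
  have htk_mem : ∀ k : ℕ, k ≤ N → (k : ℝ) * T / (N : ℝ) ∈ Set.Icc (0:ℝ) T := by
    intro k hk
    constructor
    · positivity
    · rw [div_le_iff₀ hNR]
      have h1 : (k : ℝ) ≤ (N : ℝ) := Nat.cast_le.2 hk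
      have := mul_le_mul_of_nonneg_right h1 hT.le
      linarith
  set B : ℝ := A * Δ ^ lam * Δ with hBdef
  have hB0 : 0 < B := by positivity
  have hΔlam0 : 0 < Δ ^ lam := Real.rpow_pos_of_pos hΔ0 lam
  -- key induction on grid points
  have key : ∀ k : ℕ, k ≤ N → |Y ((k : ℝ) * T / (N : ℝ)) - Yh N k| ≤ (k : ℝ) * B * q ^ k := by
    intro k
    induction k with
    | zero =>
      intro _
      have hY00 : Y 0 = Y0 := by
        have := hYeq 0 hIcc0
        simpa [intervalIntegral.integral_same, hZ0] using this
      simp [hYh0, hY00]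
    | succ k ih =>
      intro hk1
      have hk : k < N := hk1
      have ihk := ih hk.le
      obtain ⟨hpos', hrec⟩ := hYhrec N hN hcond k hk
      have hcast : ((k : ℝ) + 1) * T / (N : ℝ) = ((k + 1 : ℕ) : ℝ) * T / (N : ℝ) := by
        push_cast; ring
      set ta : ℝ := (k : ℝ) * T / (N : ℝ) with htadef
      set tb : ℝ := ((k : ℝ) + 1) * T / (N : ℝ) with htbdef
      have hta_mem : ta ∈ Set.Icc (0:ℝ) T := htk_mem k hk.le
      have htb_mem : tb ∈ Set.Icc (0:ℝ) T := by
        rw [hcast]; exact htk_mem (k+1) hk1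
      have htab : tb - ta = Δ := by
        rw [htadef, htbdef, hΔdef]; field_simp; ring
      have htale : ta ≤ tb := by linarith [htab, hΔ0]
      -- increment of Y
      have hYstep : Y tb - Y ta = (∫ s in ta..tb, fY s) + (Z tb - Z ta) :=
        hYinc ta hta_mem tb htb_mem
      -- remainder bound
      set c0 : ℝ := b tb (Y tb) with hc0def
      set R : ℝ := (∫ s in ta..tb, fY s) - c0 * Δ with hRdef
      have hRbound : |R| ≤ A * Δ ^ lam * Δ := by
        have hpt : ∀ s ∈ Set.uIoc ta tb, ‖fY s - c0‖ ≤ L * (H + 1) * Δ ^ lam := by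
          intro s hs
          rw [Set.uIoc_of_le htale] at hs
          have hs_mem : s ∈ Set.Icc (0:ℝ) T :=
            ⟨le_trans hta_mem.1 hs.1.le, le_trans hs.2 htb_mem.2⟩
          have hsub : 0 ≤ tb - s := by linarith [hs.2]
          have hsubΔ : tb - s ≤ Δ := by linarith [hs.1, htab]
          have hYd : |Y tb - Y s| ≤ H * Δ ^ lam := by
            refine le_trans (hYH s hs_mem tb htb_mem hs.2) ?_
            exact mul_le_mul_of_nonneg_left
              (Real.rpow_le_rpow hsub hsubΔ hlam0.le) hH0.le
          have htd : |s - tb| ^ lam ≤ Δ ^ lam := by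
            rw [abs_of_nonpos (by linarith [hs.2])]
            exact Real.rpow_le_rpow (by linarith) (by linarith) hlam0.le
          have hlip := hA2lip ε hε0 hε1 s hs_mem tb htb_mem (Y s) (Y tb)
            (hεY' s hs_mem) (hεY' tb htb_mem)
          rw [Real.norm_eq_abs]
          calc |fY s - c0| = |b s (Y s) - b tb (Y tb)| := rfl
          _ ≤ c1 / ε ^ p * (|Y s - Y tb| + |s - tb| ^ lam) := hlip
          _ ≤ L * (H * Δ ^ lam + Δ ^ lam) := by
              rw [hLdef]
              refine mul_le_mul_of_nonneg_left ?_ (le_of_lt (by positivity))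
              rw [abs_sub_comm] at hYd
              linarith
          _ = L * (H + 1) * Δ ^ lam := by ring
        have hR2 : R = ∫ s in ta..tb, (fY s - c0) := by
          rw [hRdef, intervalIntegral.integral_sub (hInt ta hta_mem tb htb_mem)
            (intervalIntegrable_const), intervalIntegral.integral_const, htab]
          simp [smul_eq_mul, mul_comm]
        rw [hR2]
        have := intervalIntegral.norm_integral_le_of_norm_le_const hpt
        rw [Real.norm_eq_abs] at this
        calc |∫ s in ta..tb, (fY s - c0)| ≤ L * (H + 1) * Δ ^ lam * |tb - ta| := this
        _ = A * Δ ^ lam * Δ := by rw [htab, abs_of_pos hΔ0, hAdef]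
      -- the error recursion
      set e : ℝ := Y tb - Yh N (k + 1) with hedef
      set ep : ℝ := Y ta - Yh N k with hepdef
      have heid : e = ep + R + (b tb (Y tb) - b tb (Yh N (k + 1))) * Δ := by
        have h5 : Yh N (k+1) = Yh N k + b tb (Yh N (k + 1)) * Δ + (Z tb - Z ta) := by
          rw [hΔdef]; exact hrec
        rw [hedef, hepdef, hRdef, hc0def]
        linarith [hYstep, h5]
      have hone : (b tb (Y tb) - b tb (Yh N (k+1))) * e ≤ c3 * e ^ 2 := by
        have := oneside tb htb_mem (Y tb) (Yh N (k+1)) (hYsand tb htb_mem) hpos'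
        rw [← hedef] at this
        exact this
      have habs : |e| * (1 - c3 * Δ) ≤ |ep| + |R| :=
        aux_rec16 hΔ0.le h1mΔ heid hone
      have hstep : |e| ≤ q * (|ep| + |R|) := by
        rw [hqdef, ← div_eq_inv_mul, le_div_iff₀ h1mΔ]
        exact habs
      -- conclude
      have hq_pow : q ^ 1 ≤ q ^ (k + 1) := pow_le_pow_right₀ hq1 (Nat.le_add_left 1 k)
      rw [pow_one] at hq_pow
      have hqk0 : 0 ≤ q ^ k := pow_nonneg hq0.le k
      have hfinal : |e| ≤ ((k : ℝ) + 1) * B * q ^ (k + 1) := by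
        calc |e| ≤ q * (|ep| + |R|) := hstep
        _ ≤ q * ((k : ℝ) * B * q ^ k + B) := by
            refine mul_le_mul_of_nonneg_left ?_ hq0.le
            have : |R| ≤ B := by rw [hBdef]; exact hRbound
            have h3 : |ep| ≤ (k : ℝ) * B * q ^ k := ihk
            linarith
        _ = (k : ℝ) * B * q ^ (k + 1) + B * q := by ring
        _ ≤ (k : ℝ) * B * q ^ (k + 1) + B * q ^ (k + 1) := by
            linarith [mul_le_mul_of_nonneg_left hq_pow hB0.le]
        _ = ((k : ℝ) + 1) * B * q ^ (k + 1) := by ring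
      rw [← hcast] at *
      push_cast
      calc |Y tb - Yh N (k+1)| = |e| := rfl
      _ ≤ ((k : ℝ) + 1) * B * q ^ (k + 1) := hfinal
  -- combine: bound at arbitrary t
  set m : ℕ := min N ⌊t * (N : ℝ) / T⌋₊ with hmdef
  have hmN : m ≤ N := min_le_left _ _
  have hx0 : 0 ≤ t * (N : ℝ) / T := by
    have := ht.1; positivity
  have hmx : (m : ℝ) ≤ t * (N : ℝ) / T := by
    refine le_trans ?_ (Nat.floor_le hx0)
    exact_mod_cast min_le_right N _
  have hxm1 : t * (N : ℝ) / T ≤ (m : ℝ) + 1 := by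
    rcases le_total (⌊t * (N : ℝ) / T⌋₊) N with h | h
    · have hmeq : m = ⌊t * (N : ℝ) / T⌋₊ := min_eq_right h
      rw [hmeq]
      exact (Nat.lt_floor_add_one _).le
    · have hmeq : m = N := min_eq_left h
      rw [hmeq]
      have : t * (N : ℝ) / T ≤ (N : ℝ) := by
        rw [div_le_iff₀ hT]
        nlinarith [ht.2]
      linarith
  set tm : ℝ := (m : ℝ) * T / (N : ℝ) with htmdef
  have htm_mem : tm ∈ Set.Icc (0:ℝ) T := htk_mem m hmN
  have htmt : tm ≤ t := by
    rw [htmdef, div_le_iff₀ hNR]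
    have h1 := mul_le_mul_of_nonneg_right hmx hT.le
    rw [div_mul_cancel₀ _ hT.ne'] at h1
    linarith
  have httm : t - tm ≤ Δ := by
    have h1 := mul_le_mul_of_nonneg_right hxm1 hT.le
    rw [div_mul_cancel₀ _ hT.ne'] at h1
    rw [htmdef, hΔdef, sub_le_iff_le_add, ← add_div, le_div_iff₀ hNR]
    linarith
  -- grid error bound
  have hgrid : |Y tm - Yh N m| ≤ A * T * E * Δ ^ lam := by
    have h1 := key m hmN
    have h2 : (m : ℝ) * B * q ^ m ≤ (N : ℝ) * B * q ^ N := by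
      have hm' : (m : ℝ) ≤ (N : ℝ) := Nat.cast_le.2 hmN
      have hq' : q ^ m ≤ q ^ N := pow_le_pow_right₀ hq1 hmN
      have hqN0 : 0 ≤ q ^ N := pow_nonneg hq0.le N
      calc (m : ℝ) * B * q ^ m ≤ (m : ℝ) * B * q ^ N :=
          mul_le_mul_of_nonneg_left hq' (mul_nonneg (Nat.cast_nonneg m) hB0.le)
      _ ≤ (N : ℝ) * B * q ^ N :=
          mul_le_mul_of_nonneg_right (mul_le_mul_of_nonneg_right hm' hB0.le) hqN0
    have h3 : (N : ℝ) * B * q ^ N = A * ((N : ℝ) * Δ) * Δ ^ lam * q ^ N := by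
      rw [hBdef]; ring
    have h4 : (N : ℝ) * Δ = T := by
      rw [hΔdef]; field_simp
    have h5 : A * T * Δ ^ lam * q ^ N ≤ A * T * Δ ^ lam * E := by
      refine mul_le_mul_of_nonneg_left hqE (by positivity)
    calc |Y tm - Yh N m| ≤ (m : ℝ) * B * q ^ m := h1
    _ ≤ (N : ℝ) * B * q ^ N := h2
    _ = A * T * Δ ^ lam * q ^ N := by rw [h3, h4]
    _ ≤ A * T * Δ ^ lam * E := h5
    _ = A * T * E * Δ ^ lam := by ring
  -- time increment bound
  have htinc : |Y t - Y tm| ≤ H * Δ ^ lam := by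
    refine le_trans (hYH tm htm_mem t ht htmt) ?_
    exact mul_le_mul_of_nonneg_left
      (Real.rpow_le_rpow (by linarith) httm hlam0.le) hH0.le
  have hfin : |Y t - Yh N m| ≤ C1 * Δ ^ lam := by
    calc |Y t - Yh N m| = |(Y t - Y tm) + (Y tm - Yh N m)| := by ring_nf
    _ ≤ |Y t - Y tm| + |Y tm - Yh N m| := abs_add_le _ _
    _ ≤ H * Δ ^ lam + A * T * E * Δ ^ lam := by linarith
    _ ≤ C1 * Δ ^ lam := by
        have hexp : (H + A * T * E + 1) * Δ ^ lam
            = H * Δ ^ lam + A * T * E * Δ ^ lam + Δ ^ lam := by ring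
        rw [hC1def, hexp]
        linarith [hΔlam0]
  -- raise to the power r
  have h0r : (0:ℝ) ≤ r := by linarith
  calc |Y t - Yh N m| ^ r ≤ (C1 * Δ ^ lam) ^ r :=
      Real.rpow_le_rpow (abs_nonneg _) hfin h0r
  _ = C1 ^ r * (Δ ^ lam) ^ r := Real.mul_rpow hC10.le hΔlam0.le
  _ = C1 ^ r * Δ ^ (lam * r) := by rw [← Real.rpow_mul hΔ0.le]
end

section
/- Under Assumptions (A1)–(A4), fix a noise path Z with Hölder constant Λ, let Y be the corresponding pathwise solution and, for each N with max{c3, c1/(Y(0) − φ(0))^p}·Δ_N < 1, let Ŷ_N be the corresponding drift-implicit Euler scheme. Then for every r ≥ 1 there exists a constant 𝒞 > 0, independent of N, such that max_{n=0,…,N} |1/(Y(t_n) − φ(t_n)) − 1/(Ŷ_N(t_n) − φ(t_n))|^r ≤ 𝒞·Δ_N^{λr} for every such N. -/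
open MeasureTheory intervalIntegral Filter Set

lemma holder_contOn {f : ℝ → ℝ} {S : Set ℝ} {K lam : ℝ} (hl : 0 < lam)
    (h : ∀ s ∈ S, ∀ t ∈ S, |f t - f s| ≤ K * |t - s| ^ lam) :
    ContinuousOn f S := by
  intro s hs
  have habs : Tendsto (fun t : ℝ => |t - s|) (nhdsWithin s S) (nhds 0) := by
    have h2 : Tendsto (fun t : ℝ => |t - s|) (nhds s) (nhds |s - s|) :=
      ((continuous_id.sub continuous_const).abs).tendsto s
    simpa using h2.mono_left nhdsWithin_le_nhds
  have hrp : Tendsto (fun t : ℝ => |t - s| ^ lam) (nhdsWithin s S) (nhds 0) := by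
    have hc : ContinuousAt (fun x : ℝ => x ^ lam) 0 :=
      Real.continuousAt_rpow_const 0 lam (Or.inr hl.le)
    have h3 := hc.tendsto.comp habs
    simpa [Function.comp_def, Real.zero_rpow hl.ne'] using h3
  have hg : Tendsto (fun t : ℝ => K * |t - s| ^ lam) (nhdsWithin s S) (nhds 0) := by
    simpa using hrp.const_mul K
  have h1 : Tendsto (fun t => |f t - f s|) (nhdsWithin s S) (nhds 0) := by
    refine squeeze_zero' (Filter.Eventually.of_forall fun t => abs_nonneg _) ?_ hg
    filter_upwards [self_mem_nhdsWithin] with t ht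
    exact h s hs t ht
  show Tendsto f (nhdsWithin s S) (nhds (f s))
  rw [tendsto_iff_dist_tendsto_zero]
  simpa [Real.dist_eq] using h1

set_option maxHeartbeats 1000000 in
theorem stmt_18
    (T lam : ℝ) (hT : 0 < T) (hlam : lam ∈ Set.Ioo (0:ℝ) 1)
    (phi : ℝ → ℝ) (K : ℝ) (hK : 0 < K)
    (hphiH : ∀ s ∈ Set.Icc (0:ℝ) T, ∀ t ∈ Set.Icc (0:ℝ) T, |phi t - phi s| ≤ K * |t - s| ^ lam)
    (b : ℝ → ℝ → ℝ) (c1 p c2 ystar gam : ℝ)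
    (hc1 : 0 < c1) (hp : 1 < p) (hc2 : 0 < c2) (hystar : 0 < ystar)
    (hgam : 1 / lam - 1 < gam)
    (hA2cont : ContinuousOn (fun q : ℝ × ℝ => b q.1 q.2)
      {q : ℝ × ℝ | q.1 ∈ Set.Icc (0:ℝ) T ∧ phi q.1 < q.2})
    (hA2lip : ∀ ε : ℝ, 0 < ε → ε < 1 →
      ∀ t1 ∈ Set.Icc (0:ℝ) T, ∀ t2 ∈ Set.Icc (0:ℝ) T, ∀ y1 y2 : ℝ,
        phi t1 + ε < y1 → phi t2 + ε < y2 →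
        |b t1 y1 - b t2 y2| ≤ c1 / ε ^ p * (|y1 - y2| + |t1 - t2| ^ lam))
    (hA3 : ∀ t ∈ Set.Icc (0:ℝ) T, ∀ y : ℝ, phi t < y → y ≤ phi t + ystar →
      c2 / (y - phi t) ^ gam ≤ b t y)
    (Y0 : ℝ) (hA1 : phi 0 < Y0)
    (bp : ℝ → ℝ → ℝ) (c3 : ℝ) (hc3 : 0 < c3)
    (hA4deriv : ∀ t ∈ Set.Icc (0:ℝ) T, ∀ y : ℝ, phi t < y →
      HasDerivAt (fun x => b t x) (bp t y) y)
    (hA4cont : ContinuousOn (fun q : ℝ × ℝ => bp q.1 q.2)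
      {q : ℝ × ℝ | q.1 ∈ Set.Icc (0:ℝ) T ∧ phi q.1 < q.2})
    (hA4lt : ∀ t ∈ Set.Icc (0:ℝ) T, ∀ y : ℝ, phi t < y → bp t y < c3)
    (Z : ℝ → ℝ) (Lam : ℝ) (hLam : 0 < Lam) (hZ0 : Z 0 = 0)
    (hZH : ∀ s ∈ Set.Icc (0:ℝ) T, ∀ t ∈ Set.Icc (0:ℝ) T, |Z t - Z s| ≤ Lam * |t - s| ^ lam)
    (Y : ℝ → ℝ) (hYc : ContinuousOn Y (Set.Icc (0:ℝ) T))
    (hYsand : ∀ t ∈ Set.Icc (0:ℝ) T, phi t < Y t)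
    (hYeq : ∀ t ∈ Set.Icc (0:ℝ) T, Y t = Y0 + (∫ s in (0:ℝ)..t, b s (Y s)) + Z t)
    (Yh : ℕ → ℕ → ℝ) (hYh0 : ∀ N : ℕ, Yh N 0 = Y0)
    (hYhrec : ∀ N : ℕ, 0 < N → max c3 (c1 / (Y0 - phi 0) ^ p) * (T / (N : ℝ)) < 1 → ∀ k : ℕ, k < N →
      phi (((k : ℝ) + 1) * T / (N : ℝ)) < Yh N (k + 1) ∧
      Yh N (k + 1) = Yh N k + b (((k : ℝ) + 1) * T / (N : ℝ)) (Yh N (k + 1)) * (T / (N : ℝ))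
        + (Z (((k : ℝ) + 1) * T / (N : ℝ)) - Z ((k : ℝ) * T / (N : ℝ))))
    :
    ∀ r : ℝ, 1 ≤ r → ∃ C : ℝ, 0 < C ∧
      ∀ N : ℕ, 0 < N → max c3 (c1 / (Y0 - phi 0) ^ p) * (T / (N : ℝ)) < 1 →
        ∀ n : ℕ, n ≤ N →
          |1 / (Y ((n : ℝ) * T / (N : ℝ)) - phi ((n : ℝ) * T / (N : ℝ))) - 1 / (Yh N n - phi ((n : ℝ) * T / (N : ℝ)))| ^ r
            ≤ C * (T / (N : ℝ)) ^ (lam * r) := by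
  intro r hr
  have hT0 : (0:ℝ) ≤ T := hT.le
  have hl0 : 0 < lam := hlam.1
  have hl1 : lam < 1 := hlam.2
  have h0T : (0:ℝ) ∈ Icc (0:ℝ) T := ⟨le_rfl, hT0⟩
  -- time grid membership
  have htk : ∀ N : ℕ, 0 < N → ∀ k : ℕ, k ≤ N → (k:ℝ) * T / N ∈ Icc (0:ℝ) T := by
    intro N hN k hk
    have hN0 : (0:ℝ) < N := by exact_mod_cast hN
    have hkN : (k:ℝ) ≤ N := by exact_mod_cast hk
    constructor
    · positivity
    · rw [div_le_iff₀ hN0]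
      have : (k:ℝ) * T ≤ (N:ℝ) * T := mul_le_mul_of_nonneg_right hkN hT.le
      linarith
  -- continuity of phi and min of Y - phi
  have hphic : ContinuousOn phi (Icc 0 T) := holder_contOn hl0 hphiH
  obtain ⟨s0, hs0, hs0min⟩ :=
    isCompact_Icc.exists_isMinOn (⟨0, h0T⟩ : (Icc (0:ℝ) T).Nonempty) (hYc.sub hphic)
  set m := Y s0 - phi s0 with hmdef
  have hm0 : 0 < m := sub_pos.2 (hYsand s0 hs0)
  have hmle : ∀ t ∈ Icc (0:ℝ) T, m ≤ Y t - phi t := fun t ht => hs0min ht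
  -- continuity and boundedness of g
  set g : ℝ → ℝ := fun s => b s (Y s) with hgdef
  have hgc : ContinuousOn g (Icc 0 T) := by
    have hmap : MapsTo (fun s => (s, Y s)) (Icc (0:ℝ) T)
        {q : ℝ × ℝ | q.1 ∈ Set.Icc (0:ℝ) T ∧ phi q.1 < q.2} :=
      fun s hs => ⟨hs, hYsand s hs⟩
    exact hA2cont.comp (continuousOn_id.prodMk hYc) hmap
  obtain ⟨B, hB⟩ := isCompact_Icc.exists_bound_of_continuousOn hgc
  have hB0 : 0 ≤ B := le_trans (norm_nonneg _) (hB 0 h0T)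
  have hBabs : ∀ x ∈ Icc (0:ℝ) T, |g x| ≤ B := by
    intro x hx; simpa [Real.norm_eq_abs] using hB x hx
  -- integrability
  have hgint : ∀ a ∈ Icc (0:ℝ) T, ∀ c ∈ Icc (0:ℝ) T, IntervalIntegrable g volume a c := by
    intro a ha c hc
    apply ContinuousOn.intervalIntegrable
    apply hgc.mono
    rw [← Set.uIcc_of_le hT0]
    exact Set.uIcc_subset_uIcc (Set.uIcc_of_le hT0 ▸ ha) (Set.uIcc_of_le hT0 ▸ hc)
  -- increments of Y
  have hYinc : ∀ a ∈ Icc (0:ℝ) T, ∀ c ∈ Icc (0:ℝ) T,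
      Y c - Y a = (∫ s in a..c, g s) + (Z c - Z a) := by
    intro a ha c hc
    have h1 := hYeq a ha
    have h2 := hYeq c hc
    have h3 : (∫ s in (0:ℝ)..c, g s) - (∫ s in (0:ℝ)..a, g s) = ∫ s in a..c, g s :=
      intervalIntegral.integral_interval_sub_left (hgint 0 h0T c hc) (hgint 0 h0T a ha)
    have h1' : Y a = Y0 + (∫ s in (0:ℝ)..a, g s) + Z a := h1
    have h2' : Y c = Y0 + (∫ s in (0:ℝ)..c, g s) + Z c := h2
    linarith
  -- Hölder continuity of Y
  set CY : ℝ := B * T ^ (1 - lam) + Lam with hCYdef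
  have hCY0 : 0 < CY := by
    have : 0 ≤ B * T ^ (1 - lam) := by positivity
    linarith
  have hYH : ∀ a ∈ Icc (0:ℝ) T, ∀ c ∈ Icc (0:ℝ) T, |Y c - Y a| ≤ CY * |c - a| ^ lam := by
    intro a ha c hc
    have hint : |∫ s in a..c, g s| ≤ B * |c - a| := by
      have h := intervalIntegral.norm_integral_le_of_norm_le_const (C := B) (f := g)
        (a := a) (b := c) ?_
      · simpa [Real.norm_eq_abs] using h
      · intro x hx
        have hx' : x ∈ Icc (0:ℝ) T := by
          have h1 : Set.uIoc a c ⊆ Set.uIcc a c := Set.Ioc_subset_Icc_self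
          have h2 : Set.uIcc a c ⊆ Icc (0:ℝ) T := by
            rw [← Set.uIcc_of_le hT0]
            exact Set.uIcc_subset_uIcc (Set.uIcc_of_le hT0 ▸ ha) (Set.uIcc_of_le hT0 ▸ hc)
          exact h2 (h1 hx)
        simpa [Real.norm_eq_abs] using hBabs x hx'
    have hca : |c - a| ≤ T := by
      rw [abs_le]; constructor <;> [linarith [ha.2, hc.1]; linarith [hc.2, ha.1]]
    have hkey : |c - a| ≤ T ^ (1 - lam) * |c - a| ^ lam := by
      rcases eq_or_ne c a with h | h
      · simp [h, Real.zero_rpow hl0.ne']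
      · have hpos : 0 < |c - a| := abs_pos.2 (sub_ne_zero.2 h)
        have h1 : |c - a| = |c - a| ^ (1 - lam) * |c - a| ^ lam := by
          rw [← Real.rpow_add hpos]
          norm_num
        nth_rewrite 1 [h1]
        apply mul_le_mul_of_nonneg_right _ (Real.rpow_nonneg (abs_nonneg _) _)
        exact Real.rpow_le_rpow (abs_nonneg _) hca (by linarith)
    have hZ2 := hZH a ha c hc
    have hYd := hYinc a ha c hc
    have h2 : |Y c - Y a| ≤ |∫ s in a..c, g s| + |Z c - Z a| := by
      rw [hYd]; exact abs_add_le _ _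
    have h3 : B * |c - a| ≤ B * (T ^ (1 - lam) * |c - a| ^ lam) :=
      mul_le_mul_of_nonneg_left hkey hB0
    have h4 : (B * T ^ (1 - lam) + Lam) * |c - a| ^ lam
        = B * (T ^ (1 - lam) * |c - a| ^ lam) + Lam * |c - a| ^ lam := by ring
    rw [hCYdef, h4]
    linarith
  -- epsilon and local Lipschitz constant
  set eps : ℝ := min m 1 / 2 with hepsdef
  have heps0 : 0 < eps := by have := lt_min hm0 one_pos; simp only [hepsdef]; linarith
  have heps1 : eps < 1 := by
    have : min m 1 ≤ 1 := min_le_right _ _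
    simp only [hepsdef]; linarith
  have hepsm : eps < m := by
    have : min m 1 ≤ m := min_le_left _ _
    simp only [hepsdef]; linarith
  set L : ℝ := c1 / eps ^ p with hLdef
  have hL0 : 0 < L := div_pos hc1 (Real.rpow_pos_of_pos heps0 p)
  -- one-sided Lipschitz property of b
  have hmono : ∀ t ∈ Icc (0:ℝ) T, ∀ y1 y2 : ℝ, phi t < y1 → phi t < y2 →
      (y1 - y2) * (b t y1 - b t y2) ≤ c3 * (y1 - y2) ^ 2 := by
    intro t ht y1 y2 h1 h2
    have key : ∀ u v : ℝ, phi t < u → u < v →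
        (u - v) * (b t u - b t v) ≤ c3 * (u - v) ^ 2 := by
      intro u v hu huv
      have hcont : ContinuousOn (fun x => b t x) (Icc u v) := by
        intro x hx
        exact (hA4deriv t ht x (lt_of_lt_of_le hu hx.1)).continuousAt.continuousWithinAt
      have hderiv : ∀ x ∈ Ioo u v, HasDerivAt (fun x => b t x) (bp t x) x := by
        intro x hx
        exact hA4deriv t ht x (lt_trans hu hx.1)
      obtain ⟨xi, hxi, hslope⟩ :=
        exists_hasDerivAt_eq_slope (fun x => b t x) (bp t ·) huv hcont hderiv
      have hxiphi : phi t < xi := lt_trans hu hxi.1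
      have hxic3 : bp t xi < c3 := hA4lt t ht xi hxiphi
      have hvu : (0:ℝ) < v - u := by linarith
      have heq : b t v - b t u = bp t xi * (v - u) := by
        field_simp at hslope
        linarith [hslope]
      have h20 : (u - v) * (b t u - b t v) = bp t xi * (v - u)^2 := by
        linear_combination (v - u) * heq
      have h21 : bp t xi * (v-u)^2 ≤ c3 * (v-u)^2 :=
        mul_le_mul_of_nonneg_right hxic3.le (sq_nonneg _)
      rw [h20]
      calc bp t xi * (v-u)^2 ≤ c3 * (v-u)^2 := h21
        _ = c3 * (u-v)^2 := by ring
    rcases lt_trichotomy y1 y2 with h | h | h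
    · have := key y1 y2 h1 h
      linarith
    · simp [h]
    · have h22 := key y2 y1 h2 h
      have h23 : (y1-y2)*(b t y1 - b t y2) = (y2-y1)*(b t y2 - b t y1) := by ring
      have h24 : c3*(y1-y2)^2 = c3*(y2-y1)^2 := by ring
      rw [h23, h24]
      exact h22
  -- main error estimate
  set Ce : ℝ := L * (CY + 1) * T * Real.exp (2 * c3 * T) with hCedef
  have hCe0 : 0 < Ce := by positivity
  have main : ∀ N : ℕ, 0 < N → c3 * (T / N) ≤ 1/2 →
      max c3 (c1 / (Y0 - phi 0) ^ p) * (T / (N : ℝ)) < 1 →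
      ∀ n : ℕ, n ≤ N → |Y ((n:ℝ) * T / N) - Yh N n| ≤ Ce * (T / N) ^ lam := by
    intro N hN hhalf hcond
    have hN0' : (0:ℝ) < N := by exact_mod_cast hN
    set Del : ℝ := T / N with hDeldef
    have hDel0 : 0 < Del := by rw [hDeldef]; exact div_pos hT hN0'
    have hc3D : c3 * Del < 1 := by
      have h1 : c3 * Del ≤ max c3 (c1 / (Y0 - phi 0) ^ p) * Del :=
        mul_le_mul_of_nonneg_right (le_max_left _ _) hDel0.le
      exact lt_of_le_of_lt h1 hcond
    have h1D : 0 < 1 - c3 * Del := by linarith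
    set q : ℝ := (1 - c3 * Del)⁻¹ with hqdef
    have hq0 : 0 < q := by rw [hqdef]; exact inv_pos.2 h1D
    have hq1 : 1 ≤ q := by
      rw [hqdef]
      rw [le_inv_comm₀ one_pos h1D]
      have h2 : 0 ≤ c3 * Del := by positivity
      linarith
    set tk : ℕ → ℝ := fun k => (k:ℝ) * T / N with htkdef
    have htkm : ∀ k : ℕ, k ≤ N → tk k ∈ Icc (0:ℝ) T := by
      intro k hk; simp only [htkdef]; exact htk N hN k hk
    have htkd : ∀ k : ℕ, tk (k+1) - tk k = Del := by
      intro k; simp only [htkdef, hDeldef]; push_cast; ring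
    have htkc : ∀ k : ℕ, ((k:ℝ)+1) * T / N = tk (k+1) := by
      intro k; simp only [htkdef]; push_cast; ring
    set e : ℕ → ℝ := fun k => Y (tk k) - Yh N k with hedef
    set rho : ℝ := L * (CY + 1) * Del ^ lam * Del with hrhodef
    have hrho0 : 0 ≤ rho := by
      rw [hrhodef]
      have h1 : (0:ℝ) ≤ CY + 1 := by linarith
      have h2 : (0:ℝ) ≤ Del ^ lam := Real.rpow_nonneg hDel0.le _
      exact mul_nonneg (mul_nonneg (mul_nonneg hL0.le h1) h2) hDel0.le
    have step : ∀ k : ℕ, k < N → |e (k+1)| ≤ q * (|e k| + rho) := by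
      intro k hk
      obtain ⟨hpos, hrec⟩ := hYhrec N hN (by rw [← hDeldef]; exact hcond) k hk
      rw [htkc k] at hpos hrec
      rw [← hDeldef] at hrec
      rw [show (k:ℝ) * T / N = tk k from by simp only [htkdef]] at hrec
      have hk1 : k + 1 ≤ N := hk
      have hmem1 : tk (k+1) ∈ Icc (0:ℝ) T := htkm (k+1) hk1
      have hmem0 : tk k ∈ Icc (0:ℝ) T := htkm k hk.le
      have hYd := hYinc (tk k) hmem0 (tk (k+1)) hmem1
      set R : ℝ := (∫ s in tk k..tk (k+1), g s) - g (tk (k+1)) * Del with hRdef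
      have hord : tk k ≤ tk (k+1) := by linarith [htkd k, hDel0]
      have hR : |R| ≤ rho := by
        have hRint : (∫ s in tk k..tk (k+1), (g s - g (tk (k+1)))) = R := by
          rw [intervalIntegral.integral_sub (hgint _ hmem0 _ hmem1) intervalIntegrable_const,
            intervalIntegral.integral_const, hRdef, smul_eq_mul, htkd k]
          ring
        rw [← hRint]
        have hb2 : ∀ x ∈ Set.uIoc (tk k) (tk (k+1)),
            ‖g x - g (tk (k+1))‖ ≤ L * (CY+1) * Del ^ lam := by
          intro x hx
          rw [Set.uIoc_of_le hord] at hx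
          have hxm : x ∈ Icc (0:ℝ) T := ⟨le_trans hmem0.1 hx.1.le, le_trans hx.2 hmem1.2⟩
          have hxd : |x - tk (k+1)| ≤ Del := by
            rw [abs_le]; constructor
            · linarith [htkd k, hx.1]
            · linarith [hx.2, hDel0]
          have hlip := hA2lip eps heps0 heps1 x hxm (tk (k+1)) hmem1 (Y x) (Y (tk (k+1)))
            (by linarith [hmle x hxm]) (by linarith [hmle _ hmem1])
          rw [← hLdef] at hlip
          have hY2 := hYH (tk (k+1)) hmem1 x hxm
          have hd : |x - tk (k+1)| ^ lam ≤ Del ^ lam :=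
            Real.rpow_le_rpow (abs_nonneg _) hxd hl0.le
          have hd2 : |Y x - Y (tk (k+1))| ≤ CY * Del ^ lam :=
            le_trans hY2 (mul_le_mul_of_nonneg_left hd hCY0.le)
          rw [Real.norm_eq_abs]
          calc |g x - g (tk (k+1))|
              = |b x (Y x) - b (tk (k+1)) (Y (tk (k+1)))| := by rw [hgdef]
            _ ≤ L * (|Y x - Y (tk (k+1))| + |x - tk (k+1)| ^ lam) := hlip
            _ ≤ L * (CY * Del ^ lam + Del ^ lam) := by
                apply mul_le_mul_of_nonneg_left _ hL0.le
                linarith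
            _ = L * (CY+1) * Del ^ lam := by ring
        have h6 := intervalIntegral.norm_integral_le_of_norm_le_const hb2
        rw [Real.norm_eq_abs] at h6
        have habs2 : |tk (k+1) - tk k| = Del := by rw [htkd k]; exact abs_of_pos hDel0
        rw [habs2] at h6
        calc |∫ s in tk k..tk (k+1), (g s - g (tk (k+1)))| ≤ L*(CY+1)*Del^lam * Del := h6
          _ = rho := by rw [hrhodef]
      have hone := hmono (tk (k+1)) hmem1 (Y (tk (k+1))) (Yh N (k+1)) (hYsand _ hmem1) hpos
      set D : ℝ := b (tk (k+1)) (Y (tk (k+1))) - b (tk (k+1)) (Yh N (k+1)) with hDdef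
      have hek : e (k+1) = Y (tk (k+1)) - Yh N (k+1) := by simp only [hedef]
      have hid : e (k+1) = e k + R + D * Del := by
        simp only [hedef, hRdef, hDdef]
        have hgk : g (tk (k+1)) = b (tk (k+1)) (Y (tk (k+1))) := by rw [hgdef]
        rw [← hgk]
        linarith [hYd, hrec]
      have honee : e (k+1) * D ≤ c3 * (e (k+1))^2 := by
        rw [hek]
        calc (Y (tk (k+1)) - Yh N (k+1)) * D
            ≤ c3 * (Y (tk (k+1)) - Yh N (k+1))^2 := hone
          _ = c3 * (Y (tk (k+1)) - Yh N (k+1))^2 := rfl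
      rcases eq_or_lt_of_le (abs_nonneg (e (k+1))) with h0 | h0
      · rw [← h0]
        exact mul_nonneg hq0.le (add_nonneg (abs_nonneg _) hrho0)
      · have ha2 : (e (k+1))^2 = e (k+1) * e k + e (k+1) * R + e (k+1) * (D * Del) := by
          rw [sq]; nth_rewrite 2 [hid]; ring
        have hae : e (k+1) * e k ≤ |e (k+1)| * |e k| := by
          calc e (k+1) * e k ≤ |e (k+1) * e k| := le_abs_self _
            _ = |e (k+1)| * |e k| := abs_mul _ _
        have haR : e (k+1) * R ≤ |e (k+1)| * rho := by
          calc e (k+1) * R ≤ |e (k+1) * R| := le_abs_self _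
            _ = |e (k+1)| * |R| := abs_mul _ _
            _ ≤ |e (k+1)| * rho := mul_le_mul_of_nonneg_left hR (abs_nonneg _)
        have haD : e (k+1) * (D * Del) ≤ c3 * Del * (e (k+1))^2 := by
          have h30 := mul_le_mul_of_nonneg_right honee hDel0.le
          calc e (k+1) * (D * Del) = (e (k+1) * D) * Del := by ring
            _ ≤ (c3 * (e (k+1))^2) * Del := h30
            _ = c3 * Del * (e (k+1))^2 := by ring
        have h6 : (1 - c3*Del) * (e (k+1))^2 ≤ |e (k+1)| * (|e k| + rho) := by
          have h31 : (1 - c3*Del) * (e (k+1))^2 = (e (k+1))^2 - c3 * Del * (e (k+1))^2 := by ring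
          have h32 : |e (k+1)| * (|e k| + rho) = |e (k+1)| * |e k| + |e (k+1)| * rho := by ring
          rw [h31, h32]
          linarith only [ha2, hae, haR, haD]
        have h8 : (e (k+1))^2 = |e (k+1)| * |e (k+1)| := by
          rw [abs_mul_abs_self]; ring
        have h7 : (1 - c3*Del) * |e (k+1)| ≤ |e k| + rho := by
          have h33 : ((1 - c3*Del) * |e (k+1)|) * |e (k+1)| ≤ (|e k| + rho) * |e (k+1)| := by
            calc ((1 - c3*Del) * |e (k+1)|) * |e (k+1)|
                = (1 - c3*Del) * (|e (k+1)| * |e (k+1)|) := by ring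
              _ = (1 - c3*Del) * (e (k+1))^2 := by rw [← h8]
              _ ≤ |e (k+1)| * (|e k| + rho) := h6
              _ = (|e k| + rho) * |e (k+1)| := by ring
          exact le_of_mul_le_mul_right h33 h0
        rw [hqdef, ← div_eq_inv_mul, le_div_iff₀ h1D]
        linarith
    have hbound : ∀ n : ℕ, n ≤ N → |e n| ≤ (n:ℝ) * q^n * rho := by
      intro n
      induction n with
      | zero =>
        intro _
        have htk0 : tk 0 = 0 := by simp [htkdef]
        have hY00 : Y 0 = Y0 := by
          have h9 := hYeq 0 h0T
          simpa [hZ0] using h9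
        have he0 : e 0 = 0 := by simp [hedef, htk0, hY00, hYh0]
        simp [he0]
      | succ k ih =>
        intro hk1
        have hk : k < N := hk1
        have h1 := step k hk
        have h2 := ih hk.le
        have hqk : q ≤ q^(k+1) := le_self_pow₀ hq1 (Nat.succ_ne_zero k)
        have hqq : q * q^k = q^(k+1) := by rw [pow_succ]; ring
        have hk0 : (0:ℝ) ≤ k := Nat.cast_nonneg k
        have hqkn : (0:ℝ) ≤ q^k := pow_nonneg hq0.le k
        push_cast
        calc |e (k+1)| ≤ q * (|e k| + rho) := h1
          _ ≤ q * ((k:ℝ) * q^k * rho + rho) := by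
              apply mul_le_mul_of_nonneg_left _ hq0.le
              linarith
          _ = (k:ℝ) * (q*q^k) * rho + q * rho := by ring
          _ ≤ (k:ℝ) * q^(k+1) * rho + q^(k+1) * rho := by
              rw [hqq]
              have h3 : q * rho ≤ q^(k+1) * rho := mul_le_mul_of_nonneg_right hqk hrho0
              linarith
          _ = ((k:ℝ)+1) * q^(k+1) * rho := by ring
    intro n hn
    have hb := hbound n hn
    have hnN : (n:ℝ) ≤ N := by exact_mod_cast hn
    have hqn : q^n ≤ q^N := pow_le_pow_right₀ hq1 hn
    have hqexp : q ≤ Real.exp (2*(c3*Del)) := by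
      have hx0 : 0 ≤ c3 * Del := by positivity
      have h12 : q ≤ 1 + 2*(c3*Del) := by
        have h5 : q * (1 - c3*Del) = 1 := inv_mul_cancel₀ h1D.ne'
        have hxa : 0 ≤ (c3*Del)*(1-2*(c3*Del)) := mul_nonneg hx0 (by linarith only [hhalf])
        have h61 : 1 ≤ (1+2*(c3*Del))*(1-c3*Del) := by linarith only [hxa]
        have h10 : q * (1 - c3*Del) ≤ (1+2*(c3*Del))*(1-c3*Del) := by rw [h5]; exact h61
        exact le_of_mul_le_mul_right h10 h1D
      have h13 : 1 + 2*(c3*Del) ≤ Real.exp (2*(c3*Del)) := by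
        have h14 := Real.add_one_le_exp (2*(c3*Del)); linarith
      linarith
    have hqN : q^N ≤ Real.exp (2*c3*T) := by
      calc q^N ≤ (Real.exp (2*(c3*Del)))^N := pow_le_pow_left₀ hq0.le hqexp N
        _ = Real.exp ((N:ℝ) * (2*(c3*Del))) := (Real.exp_nat_mul _ N).symm
        _ = Real.exp (2*c3*T) := by
            congr 1
            rw [hDeldef]
            field_simp
    have hNrho : (N:ℝ) * rho = L*(CY+1)*T*Del^lam := by
      rw [hrhodef, hDeldef]
      field_simp
    have hfold : |Y ((n:ℝ) * T / N) - Yh N n| = |e n| := by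
      simp only [hedef, htkdef]
    rw [hfold]
    have hexp0 : (0:ℝ) < Real.exp (2*c3*T) := Real.exp_pos _
    have hn0 : (0:ℝ) ≤ (n:ℝ) := Nat.cast_nonneg n
    have hqn0 : (0:ℝ) ≤ q^n := pow_nonneg hq0.le n
    calc |e n| ≤ (n:ℝ)*q^n*rho := hb
      _ ≤ (N:ℝ)*q^N*rho := by
          apply mul_le_mul_of_nonneg_right _ hrho0
          apply mul_le_mul hnN hqn hqn0 hN0'.le
      _ ≤ (N:ℝ)*Real.exp (2*c3*T)*rho := by
          apply mul_le_mul_of_nonneg_right _ hrho0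
          exact mul_le_mul_of_nonneg_left hqN hN0'.le
      _ = Ce * Del^lam := by
          rw [hCedef]
          have h20 : (N:ℝ)*Real.exp (2*c3*T)*rho = Real.exp (2*c3*T) * ((N:ℝ)*rho) := by ring
          rw [h20, hNrho]
          ring
  -- choice of the threshold
  set Ce' : ℝ := max Ce 1 with hCe'def
  have hCe'1 : 1 ≤ Ce' := le_max_right _ _
  have hCe'0 : 0 < Ce' := lt_of_lt_of_le one_pos hCe'1
  set A : ℝ := m / (2 * Ce') with hAdef
  have hA0 : 0 < A := by positivity
  obtain ⟨N0, hN0⟩ := exists_nat_gt (max (2 * c3 * T) (T / min (A ^ (1/lam)) 1))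
  have hN0c : ∀ N : ℕ, N0 ≤ N → 0 < N → c3 * (T / N) ≤ 1/2 ∧ Ce * (T/N) ^ lam ≤ m / 2 := by
    intro N hNN hN
    have hN0' : (0:ℝ) < N := by exact_mod_cast hN
    have hNN' : (N0:ℝ) ≤ N := by exact_mod_cast hNN
    have h1 : max (2*c3*T) (T / min (A ^ (1/lam)) 1) < (N:ℝ) := lt_of_lt_of_le hN0 hNN'
    have h2 : 2*c3*T < N := lt_of_le_of_lt (le_max_left _ _) h1
    have h3 : T / min (A ^ (1/lam)) 1 < N := lt_of_le_of_lt (le_max_right _ _) h1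
    have hmin0 : 0 < min (A ^ (1/lam)) 1 := lt_min (Real.rpow_pos_of_pos hA0 _) one_pos
    constructor
    · rw [show c3 * (T/N) = c3*T/N from by ring, div_le_iff₀ hN0']
      linarith only [h2]
    · have h5 : T / N ≤ min (A ^ (1/lam)) 1 := by
        rw [div_le_iff₀ hN0']
        have h6 : T < (N:ℝ) * min (A^(1/lam)) 1 := by
          have := (div_lt_iff₀ hmin0).1 h3
          linarith [this]
        linarith
      have h7 : T / N ≤ A ^ (1/lam) := le_trans h5 (min_le_left _ _)
      have h8 : (T/N) ^ lam ≤ (A ^ (1/lam)) ^ lam :=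
        Real.rpow_le_rpow (le_of_lt (div_pos hT hN0')) h7 hl0.le
      have h9 : (A ^ (1/lam)) ^ lam = A := by
        rw [← Real.rpow_mul hA0.le, one_div, inv_mul_cancel₀ hl0.ne', Real.rpow_one]
      have h10 : Ce * (T/N)^lam ≤ Ce' * A := by
        apply mul_le_mul (le_max_left _ _) (by rw [← h9]; exact h8)
          (Real.rpow_nonneg (le_of_lt (div_pos hT hN0')) _) hCe'0.le
      have h11 : Ce' * A = m/2 := by
        rw [hAdef]
        field_simp
      linarith
  -- finite part constant
  set val : ℕ → ℕ → ℝ := fun N n =>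
    |1 / (Y ((n : ℝ) * T / (N : ℝ)) - phi ((n : ℝ) * T / (N : ℝ)))
      - 1 / (Yh N n - phi ((n : ℝ) * T / (N : ℝ)))| with hvaldef
  set Cfin : ℝ := ∑ M ∈ Finset.range N0, ∑ n ∈ Finset.range (M+1),
      val M n * ((M:ℝ)/T) ^ lam with hCfindef
  have hterm0 : ∀ M n : ℕ, 0 ≤ val M n * ((M:ℝ)/T) ^ lam := by
    intro M n
    have h1 : 0 ≤ val M n := abs_nonneg _
    positivity
  have hCfinB : ∀ M < N0, ∀ n ≤ M, val M n * ((M:ℝ)/T) ^ lam ≤ Cfin := by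
    intro M hM n hn
    calc val M n * ((M:ℝ)/T) ^ lam
        ≤ ∑ j ∈ Finset.range (M+1), val M j * ((M:ℝ)/T) ^ lam :=
          Finset.single_le_sum (fun j _ => hterm0 M j) (Finset.mem_range.2 (Nat.lt_succ_of_le hn))
      _ ≤ Cfin := Finset.single_le_sum (f := fun M' => ∑ n ∈ Finset.range (M'+1), val M' n * ((M':ℝ)/T) ^ lam)
          (fun j _ => Finset.sum_nonneg (fun i _ => hterm0 j i)) (Finset.mem_range.2 hM)
  have hCfin0 : 0 ≤ Cfin :=
    Finset.sum_nonneg fun j _ => Finset.sum_nonneg fun i _ => hterm0 j i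
  set C' : ℝ := Cfin + 2 * Ce / m ^ 2 + 1 with hC'def
  have hC'1 : 1 ≤ C' := by
    have h1 : 0 ≤ 2 * Ce / m ^ 2 := by positivity
    simp only [hC'def]; linarith
  have hC'0 : 0 < C' := lt_of_lt_of_le one_pos hC'1
  -- the uniform first-order bound
  have claim : ∀ N : ℕ, 0 < N → max c3 (c1 / (Y0 - phi 0) ^ p) * (T / (N : ℝ)) < 1 →
      ∀ n : ℕ, n ≤ N → val N n ≤ C' * (T / N) ^ lam := by
    intro N hN hcond n hn
    have hN0' : (0:ℝ) < N := by exact_mod_cast hN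
    have hTN : (0:ℝ) < T / N := div_pos hT hN0'
    rcases lt_or_ge N N0 with hsmall | hbig
    · have h1 := hCfinB N hsmall n hn
      have h2 : ((N:ℝ)/T)^lam * (T/N)^lam = 1 := by
        rw [← Real.mul_rpow (le_of_lt (div_pos hN0' hT)) hTN.le,
          show (N:ℝ)/T * (T/N) = 1 from by field_simp]
        exact Real.one_rpow _
      have h3 : val N n = val N n * ((N:ℝ)/T)^lam * (T/N)^lam := by
        rw [mul_assoc, h2, mul_one]
      rw [h3]
      have hx0 : (0:ℝ) ≤ 2 * Ce / m ^ 2 := le_of_lt (div_pos (by linarith) (pow_pos hm0 2))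
      have h4 : val N n * ((N:ℝ)/T)^lam ≤ C' := by
        apply le_trans h1
        simp only [hC'def]
        linarith
      exact mul_le_mul_of_nonneg_right h4 (Real.rpow_nonneg hTN.le _)
    · obtain ⟨hhalf, hsm⟩ := hN0c N hbig hN
      have herr := main N hN hhalf hcond n hn
      have htm : ((n:ℝ)*T/N) ∈ Icc (0:ℝ) T := htk N hN n hn
      set t := (n:ℝ)*T/N with htdef
      have hu : m ≤ Y t - phi t := hmle t htm
      have hv : m/2 ≤ Yh N n - phi t := by
        have h5 : |Y t - Yh N n| ≤ m/2 := le_trans herr hsm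
        have h6 : Y t - Yh N n ≤ m/2 := le_trans (le_abs_self _) h5
        linarith
      have hu0 : 0 < Y t - phi t := lt_of_lt_of_le hm0 hu
      have hv0 : 0 < Yh N n - phi t := by linarith [hm0]
      have hdiff : 1/(Y t - phi t) - 1/(Yh N n - phi t)
          = (Yh N n - Y t)/((Y t - phi t)*(Yh N n - phi t)) := by
        field_simp
        ring
      have hvv : val N n = |1/(Y t - phi t) - 1/(Yh N n - phi t)| := by
        simp only [hvaldef, htdef]
      rw [hvv, hdiff, abs_div, abs_of_pos (mul_pos hu0 hv0), abs_sub_comm]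
      have hc2' : (0:ℝ) ≤ m/2 := by linarith
      have hm2' : (0:ℝ) < m/2 := by linarith
      have hden : m * (m/2) ≤ (Y t - phi t)*(Yh N n - phi t) :=
        mul_le_mul hu hv hc2' hu0.le
      calc |Y t - Yh N n| / ((Y t - phi t)*(Yh N n - phi t))
          ≤ (Ce * (T/N)^lam) / (m*(m/2)) := by
            apply div_le_div₀ (mul_nonneg hCe0.le (Real.rpow_nonneg hTN.le _)) herr
              (mul_pos hm0 hm2') hden
        _ = (2*Ce/m^2) * (T/N)^lam := by
            field_simp
        _ ≤ C' * (T/N)^lam := by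
            apply mul_le_mul_of_nonneg_right _ (Real.rpow_nonneg hTN.le _)
            simp only [hC'def]
            linarith [hCfin0]
  -- conclusion
  refine ⟨C' ^ r, Real.rpow_pos_of_pos hC'0 r, ?_⟩
  intro N hN hcond n hn
  have hTN0 : (0:ℝ) ≤ T / N := by positivity
  have h1 : val N n ≤ C' * (T / N) ^ lam := claim N hN hcond n hn
  have h2 : |1 / (Y ((n : ℝ) * T / (N : ℝ)) - phi ((n : ℝ) * T / (N : ℝ)))
      - 1 / (Yh N n - phi ((n : ℝ) * T / (N : ℝ)))| ^ r ≤ (C' * (T / N) ^ lam) ^ r :=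
    Real.rpow_le_rpow (abs_nonneg _) h1 (le_trans zero_le_one hr)
  calc |1 / (Y ((n : ℝ) * T / (N : ℝ)) - phi ((n : ℝ) * T / (N : ℝ)))
      - 1 / (Yh N n - phi ((n : ℝ) * T / (N : ℝ)))| ^ r
      ≤ (C' * (T / N) ^ lam) ^ r := h2
    _ = C' ^ r * ((T / N) ^ lam) ^ r := Real.mul_rpow hC'0.le (Real.rpow_nonneg hTN0 _)
    _ = C' ^ r * (T / N) ^ (lam * r) := by rw [← Real.rpow_mul hTN0]
end
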